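/- arXiv:1406.1851 — 9 statements merged into one kernel-verified Lean document; each statement's English description precedes it below -/
import Mathlib

section
/- Let a_1, ..., a_m ∈ ℤ[y, y⁻¹] satisfy a_1 · a_2 · ... · a_m = (−1)^{m₂} and a_1 + a_2 + ... + a_m = m₁·y − m₂·y⁻¹, where m₁, m₂ are positive integers with m₁ + m₂ = m. Then, up to a permutation of the indices, a_i = y for i = 1, ..., m₁ and a_i = −y⁻¹ for i = m₁+1, ..., m; equivalently, the multiset {a_1, ..., a_m} consists of m₁ copies of y and m₂ copies of −y⁻¹. -/
open LaurentPolynomial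

lemma aux_unit {f : LaurentPolynomial ℤ} (hf : IsUnit f) :
    ∃ (s n : ℤ), (s = 1 ∨ s = -1) ∧ f = AddMonoidAlgebra.single n s := by
  obtain ⟨n, p, hp⟩ := f.exists_T_pow
  obtain ⟨g, hg⟩ := hf.exists_right_inv
  obtain ⟨k, q, hq⟩ := g.exists_T_pow
  have hpq : p * q = Polynomial.X ^ (n + k) := by
    apply Polynomial.toLaurent_injective
    rw [map_mul, hp, hq, Polynomial.toLaurent_X_pow]
    push_cast
    rw [T_add]
    calc f * T n * (g * T k) = f * g * (T n * T k) := by ring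
    _ = T n * T k := by rw [hg, one_mul]
  have hdvd : p ∣ Polynomial.X ^ (n + k) := ⟨q, hpq.symm⟩
  obtain ⟨i, hi, u, hu⟩ := (dvd_prime_pow Polynomial.prime_X (n + k)).mp hdvd
  obtain ⟨r, hr, hru⟩ := Polynomial.isUnit_iff.mp u.isUnit
  have hp2 : p = Polynomial.X ^ i * ((u⁻¹ : (Polynomial ℤ)ˣ) : Polynomial ℤ) := by
    rw [← hu, mul_assoc, Units.mul_inv, mul_one]
  obtain ⟨r', hr', hru'⟩ := Polynomial.isUnit_iff.mp (u⁻¹ : (Polynomial ℤ)ˣ).isUnit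
  refine ⟨r', (i : ℤ) - n, Int.isUnit_iff.mp hr', ?_⟩
  have hfT : f = Polynomial.toLaurent p * T (-n) := by
    rw [hp, mul_assoc, ← T_add]; simp
  rw [hfT, hp2, ← hru', map_mul, Polynomial.toLaurent_X_pow, Polynomial.toLaurent_C,
    single_eq_C_mul_T]
  rw [mul_comm (T (i:ℤ)) (C r'), mul_assoc, ← T_add]
  ring_nf

/-- If Laurent polynomials `a_1, …, a_m ∈ ℤ[y, y⁻¹]` (with `m = m₁ + m₂`,
`m₁, m₂ > 0`) satisfy `a_1 ⋯ a_m = (-1)^{m₂}` and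
`a_1 + ⋯ + a_m = m₁·y - m₂·y⁻¹`, then up to a permutation of the indices,
`a_i = y` for `i ≤ m₁` and `a_i = -y⁻¹` otherwise. -/
theorem stmt6 (m₁ m₂ : ℕ) (h₁ : 0 < m₁) (h₂ : 0 < m₂)
    (a : Fin (m₁ + m₂) → LaurentPolynomial ℤ)
    (hprod : ∏ i, a i = (-1) ^ m₂)
    (hsum : ∑ i, a i =
      (m₁ : LaurentPolynomial ℤ) * T 1 - (m₂ : LaurentPolynomial ℤ) * T (-1)) :
    ∃ σ : Equiv.Perm (Fin (m₁ + m₂)), ∀ i : Fin (m₁ + m₂),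
      a (σ i) = if (i : ℕ) < m₁ then T 1 else -T (-1) := by
  classical
  have hu : ∀ i, IsUnit (a i) := by
    intro i
    refine isUnit_of_dvd_unit (Finset.dvd_prod_of_mem a (Finset.mem_univ i)) ?_
    rw [hprod]
    exact (isUnit_one.neg).pow m₂
  choose s n hs ha using fun i => aux_unit (hu i)
  have hsum' : ∑ i, Finsupp.single (n i) (s i) =
      Finsupp.single 1 (m₁ : ℤ) - Finsupp.single (-1) (m₂ : ℤ) := by
    calc ∑ i, Finsupp.single (n i) (s i) = (∑ i, a i).coeff := by
          rw [AddMonoidAlgebra.coeff_sum]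
          refine Finset.sum_congr rfl fun i _ => by rw [ha i]; rfl
    _ = ((m₁ : LaurentPolynomial ℤ) * T 1 - (m₂ : LaurentPolynomial ℤ) * T (-1)).coeff := by
          rw [hsum]
    _ = _ := by
          rw [show ((m₁:ℕ) : LaurentPolynomial ℤ) = C (m₁ : ℤ) from (map_natCast C m₁).symm,
            show ((m₂:ℕ) : LaurentPolynomial ℤ) = C (m₂ : ℤ) from (map_natCast C m₂).symm,
            ← single_eq_C_mul_T, ← single_eq_C_mul_T]
          rfl
  have hcoeff : ∀ t : ℤ, (∑ i, if n i = t then s i else 0) =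
      (if (1:ℤ) = t then (m₁:ℤ) else 0) - (if (-1:ℤ) = t then (m₂:ℤ) else 0) := by
    intro t
    have := DFunLike.congr_fun hsum' t
    rwa [Finsupp.finset_sum_apply, Finsupp.sub_apply, Finsupp.single_apply,
      Finsupp.single_apply, Finset.sum_congr rfl
        (fun i _ => (Finsupp.single_apply : Finsupp.single (n i) (s i) t = _))] at this
  set F1 : Finset (Fin (m₁ + m₂)) := Finset.univ.filter (fun i => n i = 1) with hF1
  set F2 : Finset (Fin (m₁ + m₂)) := Finset.univ.filter (fun i => n i = -1) with hF2
  have hs1 : ∑ i ∈ F1, s i = (m₁ : ℤ) := by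
    rw [hF1, Finset.sum_filter]
    simpa using hcoeff 1
  have hs2 : ∑ i ∈ F2, s i = -(m₂ : ℤ) := by
    rw [hF2, Finset.sum_filter]
    simpa using hcoeff (-1)
  -- cardinality bounds
  have hb1 : (m₁ : ℤ) ≤ F1.card := by
    rw [← hs1]
    calc ∑ i ∈ F1, s i ≤ ∑ _i ∈ F1, (1:ℤ) :=
      Finset.sum_le_sum fun i _ => by rcases hs i with h | h <;> simp [h]
    _ = F1.card := by simp
  have hb2 : (m₂ : ℤ) ≤ F2.card := by
    have h0 : -(F2.card : ℤ) ≤ ∑ i ∈ F2, s i := by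
      calc -(F2.card : ℤ) = ∑ _i ∈ F2, (-1:ℤ) := by simp
      _ ≤ ∑ i ∈ F2, s i :=
        Finset.sum_le_sum fun i _ => by rcases hs i with h | h <;> simp [h]
    rw [hs2] at h0
    omega
  have hdisj : Disjoint F1 F2 := by
    rw [Finset.disjoint_left]
    intro i hi1 hi2
    rw [hF1, Finset.mem_filter] at hi1
    rw [hF2, Finset.mem_filter] at hi2
    omega
  have hcards : F1.card + F2.card ≤ m₁ + m₂ := by
    calc F1.card + F2.card = (F1 ∪ F2).card := (Finset.card_union_of_disjoint hdisj).symm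
    _ ≤ (Finset.univ : Finset (Fin (m₁ + m₂))).card := Finset.card_le_card (Finset.subset_univ _)
    _ = m₁ + m₂ := by simp
  have hc1 : F1.card = m₁ := by omega
  have hc2 : F2.card = m₂ := by omega
  have hunion : F1 ∪ F2 = Finset.univ := by
    apply Finset.eq_univ_of_card
    rw [Finset.card_union_of_disjoint hdisj, hc1, hc2]
    simp
  -- all signs are forced
  have hsF1 : ∀ i ∈ F1, s i = 1 := by
    intro i hi
    have hz : ∑ j ∈ F1, ((1:ℤ) - s j) = 0 := by
      rw [Finset.sum_sub_distrib, hs1]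
      simp [hc1]
    have := (Finset.sum_eq_zero_iff_of_nonneg
      (fun j hj => by rcases hs j with h | h <;> simp [h])).mp hz i hi
    omega
  have hsF2 : ∀ i ∈ F2, s i = -1 := by
    intro i hi
    have hz : ∑ j ∈ F2, ((1:ℤ) + s j) = 0 := by
      rw [Finset.sum_add_distrib, hs2]
      simp [hc2]
    have := (Finset.sum_eq_zero_iff_of_nonneg
      (fun j hj => by rcases hs j with h | h <;> simp [h])).mp hz i hi
    omega
  -- values of a
  have haF1 : ∀ i ∈ F1, a i = T 1 := by
    intro i hi
    have hn : n i = 1 := by rw [hF1, Finset.mem_filter] at hi; exact hi.2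
    rw [ha i, hn, hsF1 i hi]; rfl
  have haF2 : ∀ i ∈ F2, a i = -T (-1) := by
    intro i hi
    have hn : n i = -1 := by rw [hF2, Finset.mem_filter] at hi; exact hi.2
    rw [ha i, hn, hsF2 i hi]
    simpa using (Finsupp.single_neg (-1:ℤ) (1:ℤ))
  have hTne : (T 1 : LaurentPolynomial ℤ) ≠ -T (-1) := by
    intro h
    have h2 : (Finsupp.single (1:ℤ) (1:ℤ) : ℤ →₀ ℤ) = -Finsupp.single (-1:ℤ) (1:ℤ) :=
      congrArg AddMonoidAlgebra.coeff h
    have h3 := DFunLike.congr_fun h2 1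
    simp [Finsupp.single_apply] at h3
  -- fibers of a
  have hmemF1 : ∀ i, a i = T 1 ↔ i ∈ F1 := by
    intro i
    constructor
    · intro h
      by_contra hn1
      have hi2 : i ∈ F2 := by
        have : i ∈ F1 ∪ F2 := hunion ▸ Finset.mem_univ i
        rcases Finset.mem_union.mp this with h' | h'
        · exact absurd h' hn1
        · exact h'
      exact hTne (h ▸ haF2 i hi2)
    · exact haF1 i
  -- cardinalities of the subtypes
  have cardP : Fintype.card {i : Fin (m₁ + m₂) // a i = T 1} = m₁ := by
    rw [Fintype.card_subtype]
    rw [show Finset.univ.filter (fun i => a i = T 1) = F1 by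
      ext i; simp only [Finset.mem_filter, Finset.mem_univ, true_and]; exact hmemF1 i]
    exact hc1
  have cardP' : Fintype.card {i : Fin (m₁ + m₂) // (i : ℕ) < m₁} = m₁ := by
    have e : {i : Fin (m₁ + m₂) // (i : ℕ) < m₁} ≃ Fin m₁ :=
      { toFun := fun x => ⟨x.1.1, x.2⟩
        invFun := fun j => ⟨⟨j.1, lt_of_lt_of_le j.2 (Nat.le_add_right m₁ m₂)⟩, j.2⟩
        left_inv := fun x => Subtype.ext (Fin.ext rfl)
        right_inv := fun j => rfl }
    rw [Fintype.card_congr e, Fintype.card_fin]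
  have cardN : Fintype.card {i : Fin (m₁ + m₂) // ¬ a i = T 1} = m₂ := by
    have := Fintype.card_subtype_compl (fun i : Fin (m₁ + m₂) => a i = T 1)
    rw [this, cardP]
    simp
  have cardN' : Fintype.card {i : Fin (m₁ + m₂) // ¬ (i : ℕ) < m₁} = m₂ := by
    have := Fintype.card_subtype_compl (fun i : Fin (m₁ + m₂) => (i : ℕ) < m₁)
    rw [this, cardP']
    simp
  let eP : {i : Fin (m₁ + m₂) // (i : ℕ) < m₁} ≃ {i : Fin (m₁ + m₂) // a i = T 1} :=
    Fintype.equivOfCardEq (by rw [cardP, cardP'])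
  let eN : {i : Fin (m₁ + m₂) // ¬ (i : ℕ) < m₁} ≃ {i : Fin (m₁ + m₂) // ¬ a i = T 1} :=
    Fintype.equivOfCardEq (by rw [cardN, cardN'])
  refine ⟨(Equiv.sumCompl (fun i : Fin (m₁ + m₂) => (i : ℕ) < m₁)).symm.trans
    ((Equiv.sumCongr eP eN).trans (Equiv.sumCompl (fun i => a i = T 1))), ?_⟩
  intro i
  by_cases h : (i : ℕ) < m₁
  · rw [if_pos h]
    have e1 : (Equiv.sumCompl fun i : Fin (m₁ + m₂) => (i : ℕ) < m₁).symm i = Sum.inl ⟨i, h⟩ :=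
      Equiv.sumCompl_symm_apply_of_pos (p := fun j : Fin (m₁ + m₂) => (j : ℕ) < m₁) (a := i) h
    rw [Equiv.trans_apply, Equiv.trans_apply, e1, Equiv.sumCongr_apply, Sum.map_inl,
      Equiv.sumCompl_apply_inl]
    exact (eP ⟨i, h⟩).2
  · rw [if_neg h]
    have e1 : (Equiv.sumCompl fun i : Fin (m₁ + m₂) => (i : ℕ) < m₁).symm i = Sum.inr ⟨i, h⟩ :=
      Equiv.sumCompl_symm_apply_of_neg (p := fun j : Fin (m₁ + m₂) => (j : ℕ) < m₁) (a := i) h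
    rw [Equiv.trans_apply, Equiv.trans_apply, e1, Equiv.sumCongr_apply, Sum.map_inr,
      Equiv.sumCompl_apply_inr]
    have hne := (eN ⟨i, h⟩).2
    have hmem : ((eN ⟨i, h⟩ : {j : Fin (m₁ + m₂) // ¬ a j = T 1}) : Fin (m₁ + m₂)) ∈ F2 := by
      have hm : ((eN ⟨i, h⟩ : {j : Fin (m₁ + m₂) // ¬ a j = T 1}) : Fin (m₁ + m₂)) ∈ F1 ∪ F2 :=
        hunion ▸ Finset.mem_univ _
      rcases Finset.mem_union.mp hm with h' | h'
      · exact absurd ((hmemF1 _).mpr h') hne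
      · exact h'
    exact haF2 _ hmem
end

section
/- Under the stated hypotheses, S is invertible and S − S⁻¹ = (a⁻¹ − a)·(ξ·ξᵀ − I), where ξ·ξᵀ denotes the l×l matrix whose (i, j) entry is ξ_i ξ_j and I is the l×l identity matrix. -/
open Matrix

/-- `vecMulVec` of two `mulVec`s. -/
lemma vecMulVec_mulVec_aux {K : Type*} [CommRing K] {l : ℕ}
    (T : Matrix (Fin l) (Fin l) K) (u v : Fin l → K) :
    vecMulVec (T.mulVec u) (T.mulVec v) = T * vecMulVec u v * T.transpose := by
  rw [vecMulVec_eq Unit, vecMulVec_eq Unit, Matrix.replicateCol_mulVec,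
    ← Matrix.vecMul_transpose, Matrix.replicateRow_vecMul]
  simp only [Matrix.mul_assoc]

/-- Let `S = T·Λ·Tᵀ` with `T·Tᵀ = 1`, where `Λ` is diagonal with entries `a`
(multiplicity `m`), `-a⁻¹` (multiplicity `l-m-1`) and `c` (multiplicity 1).
If `ξ` satisfies `S·ξ = c·ξ` and `Σ ξ_i² = 1 - (c - c⁻¹)/(a - a⁻¹) ≠ 0`, then
`S` is invertible and `S - S⁻¹ = (a⁻¹ - a)·(ξ·ξᵀ - I)`. -/
theorem stmt7 {K : Type*} [Field K] (l m : ℕ) (hl : 1 ≤ l) (hm : m ≤ l - 1)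
    (a c : K) (ha : a ≠ 0) (hc : c ≠ 0) (ha2 : a ^ 2 ≠ 1) (hca : c ≠ a) (hca' : c ≠ -a⁻¹)
    (T S : Matrix (Fin l) (Fin l) K)
    (hT : T * T.transpose = 1)
    (hS : S = T * Matrix.diagonal
      (fun i : Fin l => if (i : ℕ) < m then a else if (i : ℕ) < l - 1 then -a⁻¹ else c) * T.transpose)
    (ξ : Fin l → K)
    (hξ : S.mulVec ξ = c • ξ)
    (hnorm : ∑ i, ξ i ^ 2 = 1 - (c - c⁻¹) / (a - a⁻¹))
    (hne : 1 - (c - c⁻¹) / (a - a⁻¹) ≠ 0) :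
    IsUnit S ∧ S - S⁻¹ = (a⁻¹ - a) • (Matrix.vecMulVec ξ ξ - 1) := by
  have hTT : T.transpose * T = 1 := mul_eq_one_comm.mp hT
  set d : Fin l → K := fun i : Fin l =>
    if (i : ℕ) < m then a else if (i : ℕ) < l - 1 then -a⁻¹ else c with hd
  have hainv : a⁻¹ ≠ 0 := inv_ne_zero ha
  have haa : a - a⁻¹ ≠ 0 := by
    intro h
    apply ha2
    have : a * a - a * a⁻¹ = 0 := by rw [← mul_sub, h, mul_zero]
    rw [mul_inv_cancel₀ ha] at this
    have : a * a = 1 := by linear_combination this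
    rw [sq]; exact this
  have hd0 : ∀ i, d i ≠ 0 := by
    intro i
    simp only [hd]
    split_ifs
    · exact ha
    · exact neg_ne_zero.mpr hainv
    · exact hc
  -- invertibility of the diagonal matrix
  have hdu : IsUnit (Matrix.diagonal d) := by
    rw [Matrix.isUnit_diagonal]
    exact IsUnit.of_mul_eq_one (a := d) (fun i => (d i)⁻¹)
      (funext fun i => mul_inv_cancel₀ (hd0 i))
  have hDinv : Matrix.diagonal d * Matrix.diagonal (fun i => (d i)⁻¹) = 1 := by
    rw [Matrix.diagonal_mul_diagonal]
    convert Matrix.diagonal_one using 2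
    exact funext fun i => mul_inv_cancel₀ (hd0 i)
  have hTu : IsUnit T := IsUnit.of_mul_eq_one T.transpose hT
  have hTu' : IsUnit T.transpose := IsUnit.of_mul_eq_one T hTT
  have hSU : IsUnit S := by
    rw [hS]
    exact (hTu.mul hdu).mul hTu'
  refine ⟨hSU, ?_⟩
  -- inverse formula
  have hSinv : S⁻¹ = T * Matrix.diagonal (fun i => (d i)⁻¹) * T.transpose := by
    apply Matrix.inv_eq_right_inv
    rw [hS]
    calc T * Matrix.diagonal d * T.transpose * (T * Matrix.diagonal (fun i => (d i)⁻¹) * T.transpose)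
        = T * Matrix.diagonal d * (T.transpose * T) * Matrix.diagonal (fun i => (d i)⁻¹) * T.transpose := by
          simp only [Matrix.mul_assoc]
      _ = T * (Matrix.diagonal d * Matrix.diagonal (fun i => (d i)⁻¹)) * T.transpose := by
          rw [hTT]
          simp only [Matrix.mul_one, Matrix.mul_assoc]
      _ = 1 := by rw [hDinv, mul_one, hT]
  -- the c-eigenvector in the T-basis
  set η : Fin l → K := T.transpose.mulVec ξ with hη
  have hξη : T.mulVec η = ξ := by
    rw [hη, Matrix.mulVec_mulVec, hT, Matrix.one_mulVec]
  have hTS : T.transpose * S = Matrix.diagonal d * T.transpose := by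
    rw [hS]
    calc T.transpose * (T * Matrix.diagonal d * T.transpose)
        = (T.transpose * T) * (Matrix.diagonal d * T.transpose) := by
          simp only [Matrix.mul_assoc]
      _ = Matrix.diagonal d * T.transpose := by rw [hTT, one_mul]
  have hΛη : (Matrix.diagonal d).mulVec η = c • η := by
    have h1 : (T.transpose * S).mulVec ξ = (Matrix.diagonal d * T.transpose).mulVec ξ := by
      rw [hTS]
    rw [← Matrix.mulVec_mulVec, ← Matrix.mulVec_mulVec, hξ, Matrix.mulVec_smul] at h1
    exact h1.symm
  have hηzero : ∀ i : Fin l, (i : ℕ) < l - 1 → η i = 0 := by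
    intro i hi
    have h2 := congrFun hΛη i
    rw [Matrix.mulVec_diagonal] at h2
    have h3 : (d i - c) * η i = 0 := by
      rw [sub_mul, h2]; simp
    rcases mul_eq_zero.mp h3 with h4 | h4
    · exfalso
      have h5 : d i = c := sub_eq_zero.mp h4
      simp only [hd] at h5
      by_cases h6 : (i : ℕ) < m
      · rw [if_pos h6] at h5
        exact hca h5.symm
      · rw [if_neg h6, if_pos hi] at h5
        exact hca' h5.symm
    · exact h4
  -- the special vector e
  set lst : Fin l := ⟨l - 1, by omega⟩ with hlst
  set e : Fin l → K := fun i => if (i : ℕ) < l - 1 then 0 else 1 with he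
  have hηe : η = η lst • e := by
    funext i
    by_cases hi : (i : ℕ) < l - 1
    · simp [hηzero i hi, he, hi]
    · have : i = lst := by
        apply Fin.ext
        simp only [hlst]
        omega
      subst this
      simp [he, hi]
  -- norm computation
  have hsum : ∑ i, ξ i ^ 2 = (η lst) ^ 2 := by
    have h1 : ∑ i, ξ i ^ 2 = ξ ⬝ᵥ ξ := by
      simp [dotProduct, sq]
    have h2 : η ⬝ᵥ η = ξ ⬝ᵥ ξ := by
      nth_rewrite 2 [hη]
      rw [Matrix.dotProduct_mulVec, Matrix.vecMul_transpose, hξη]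
    have h3 : η ⬝ᵥ η = (η lst) ^ 2 := by
      rw [dotProduct]
      rw [Finset.sum_eq_single lst]
      · ring
      · intro b _ hb
        have hb' : (b : ℕ) < l - 1 := by
          rcases lt_or_ge (b : ℕ) (l - 1) with h | h
          · exact h
          · exfalso; apply hb; apply Fin.ext; simp only [hlst]; omega
        rw [hηzero b hb', mul_zero]
      · intro h; exact absurd (Finset.mem_univ lst) h
    rw [h1, ← h2, h3]
  -- ξξᵀ in terms of T e eᵀ Tᵀ
  have hvv : Matrix.vecMulVec ξ ξ = (η lst) ^ 2 • (T * Matrix.vecMulVec e e * T.transpose) := by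
    rw [← vecMulVec_mulVec_aux, ← hξη, hηe]
    ext i j
    simp only [Matrix.vecMulVec_apply, Matrix.smul_apply, Matrix.mulVec_smul, Pi.smul_apply,
      smul_eq_mul]
    have helst : e lst = 1 := by
      simp only [he, hlst]
      rw [if_neg (lt_irrefl _)]
    rw [helst]
    ring
  -- diagonal decomposition
  have hdiag : Matrix.diagonal (fun i => d i - (d i)⁻¹) =
      (a - a⁻¹) • (1 : Matrix (Fin l) (Fin l) K) +
        ((c - c⁻¹) - (a - a⁻¹)) • Matrix.vecMulVec e e := by
    ext i j
    by_cases hij : i = j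
    · subst hij
      simp only [Matrix.diagonal_apply_eq, Matrix.add_apply, Matrix.smul_apply,
        Matrix.one_apply_eq, Matrix.vecMulVec_apply, smul_eq_mul, mul_one]
      by_cases h2 : (i : ℕ) < l - 1
      · have he0 : e i = 0 := by simp [he, h2]
        have hdi : d i - (d i)⁻¹ = a - a⁻¹ := by
          by_cases h1 : (i : ℕ) < m
          · simp only [hd]
            rw [if_pos h1]
          · simp only [hd]
            rw [if_neg h1, if_pos h2, inv_neg, inv_inv]
            ring
        rw [hdi, he0]
        ring
      · have he1 : e i = 1 := by simp [he, h2]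
        have hdi : d i - (d i)⁻¹ = c - c⁻¹ := by
          simp only [hd]
          rw [if_neg (by omega : ¬ (i : ℕ) < m), if_neg h2]
        rw [hdi, he1]
        ring
    · have hf : e i * e j = 0 := by
        simp only [he]
        split_ifs with h1 h2
        · exact zero_mul _
        · exact zero_mul _
        · exact mul_zero _
        · exfalso
          apply hij
          apply Fin.ext
          have := i.isLt
          have := j.isLt
          omega
      rw [Matrix.diagonal_apply_ne _ hij]
      simp only [Matrix.add_apply, Matrix.smul_apply, Matrix.one_apply_ne hij,
        Matrix.vecMulVec_apply, smul_eq_mul, mul_zero, hf, add_zero]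
  -- the key scalar identity
  have hkey : (c - c⁻¹) - (a - a⁻¹) = (a⁻¹ - a) * (η lst) ^ 2 := by
    have h1 : (η lst) ^ 2 = 1 - (c - c⁻¹) / (a - a⁻¹) := by rw [← hsum, hnorm]
    rw [h1]
    symm
    calc (a⁻¹ - a) * (1 - (c - c⁻¹) / (a - a⁻¹))
        = -((a - a⁻¹) * 1 - (a - a⁻¹) * ((c - c⁻¹) / (a - a⁻¹))) := by ring
      _ = -((a - a⁻¹) - (c - c⁻¹)) := by rw [mul_one, mul_div_cancel₀ _ haa]
      _ = (c - c⁻¹) - (a - a⁻¹) := by ring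
  -- put everything together
  have hdiff : S - S⁻¹ = T * Matrix.diagonal (fun i => d i - (d i)⁻¹) * T.transpose := by
    rw [hSinv, hS]
    have hds : Matrix.diagonal (fun i => d i - (d i)⁻¹) =
        Matrix.diagonal d - Matrix.diagonal (fun i => (d i)⁻¹) := by
      rw [← Matrix.diagonal_sub]
    rw [hds, Matrix.mul_sub, Matrix.sub_mul]
  rw [hdiff, hdiag]
  simp only [Matrix.mul_add, Matrix.add_mul, Matrix.mul_smul, Matrix.smul_mul,
    Matrix.mul_one, hT]
  rw [hkey, ← smul_smul, ← hvv]
  module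
end

section
/- Under the stated hypotheses, and assuming in addition that S has the anti-triangular shape S_{i,j} = 0 whenever i + j < l + 1, S_{i,l+1−i} = a⁻¹ whenever 2i ≠ l + 1, and S_{i,i} = 1 when 2i = l + 1 (indices i, j ∈ {1, ..., l}), one has ξ_i · ξ_{l+1−i} = 1 for every i = 1, ..., l. -/
open Finset

/-- The window `{j : p ≤ j ≤ n - p}` used in the peeling induction. -/
def stmt8W (n p : ℕ) : Finset (Fin (n+1)) :=
  Finset.univ.filter (fun j => p ≤ (j : ℕ) ∧ (j : ℕ) + p ≤ n)

lemma stmt8W_mem {n p : ℕ} {j : Fin (n+1)} :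
    j ∈ stmt8W n p ↔ p ≤ (j : ℕ) ∧ (j : ℕ) + p ≤ n := by
  simp [stmt8W]

lemma stmt8W_zero (n : ℕ) : stmt8W n 0 = Finset.univ := by
  ext j
  have := j.isLt
  simp only [stmt8W, Finset.mem_filter, Finset.mem_univ, true_and, iff_true]
  omega

lemma stmt8W_split {n p : ℕ} (h : 2*p < n) (lo hi : Fin (n+1))
    (hlo : (lo : ℕ) = p) (hhi : (hi : ℕ) + p = n)
    {M : Type*} [AddCommMonoid M] (f : Fin (n+1) → M) :
    ∑ j ∈ stmt8W n p, f j = f lo + f hi + ∑ j ∈ stmt8W n (p+1), f j := by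
  have h2 : hi ∉ stmt8W n (p+1) := by
    simp only [stmt8W_mem, not_and]
    omega
  have h3 : lo ∉ insert hi (stmt8W n (p+1)) := by
    simp only [Finset.mem_insert, stmt8W_mem, Fin.ext_iff, not_or, not_and]
    omega
  have h1 : stmt8W n p = insert lo (insert hi (stmt8W n (p+1))) := by
    ext k
    simp only [stmt8W_mem, Finset.mem_insert, Fin.ext_iff]
    omega
  rw [h1, Finset.sum_insert h3, Finset.sum_insert h2, ← add_assoc]

lemma stmt8W_single {n p : ℕ} (h : 2*p = n) (lo : Fin (n+1)) (hlo : (lo : ℕ) = p) :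
    stmt8W n p = {lo} := by
  ext k
  simp only [stmt8W_mem, Finset.mem_singleton, Fin.ext_iff]
  omega

lemma stmt8core {K : Type*} [Field K] {n : ℕ} (a b c : K)
    (hab : a * b = 1) (hba : b - a ≠ 0) (hc : c ≠ 0)
    (S : Matrix (Fin (n+1)) (Fin (n+1)) K) (ξ : Fin (n+1) → K)
    (hsym : ∀ i j, S i j = S j i)
    (heig : ∀ i, ∑ j, S i j * ξ j = c * ξ i)
    (hrank : ∀ i j, ∑ k, S i k * S k j
      = (a - b) * S i j + (if i = j then 1 else 0) + c * (b - a) * (ξ i * ξ j))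
    (hs0 : ∀ i j : Fin (n+1), (i : ℕ) + (j : ℕ) < n → S i j = 0)
    (hs1 : ∀ i j : Fin (n+1), (i : ℕ) + (j : ℕ) = n → (i : ℕ) ≠ (j : ℕ) → S i j = b)
    (hs2 : ∀ i : Fin (n+1), 2 * (i : ℕ) = n → S i i = 1) :
    ∀ i j : Fin (n+1), (i : ℕ) + (j : ℕ) = n → ξ i * ξ j = 1 := by
  have ha : a ≠ 0 := by
    intro h; rw [h, zero_mul] at hab; exact zero_ne_one hab
  have stepC : ∀ p : ℕ, 2*p ≤ n →
      (∀ i ∈ stmt8W n p, ∑ j ∈ stmt8W n p, S i j * ξ j = a^(2*p) * c * ξ i) →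
      (∀ i ∈ stmt8W n p, ∀ j ∈ stmt8W n p, ∑ k ∈ stmt8W n p, S i k * S k j
        = (a - b) * S i j + (if i = j then 1 else 0) + a^(2*p) * (c * (b - a)) * (ξ i * ξ j)) →
      ∀ i j : Fin (n+1), (i : ℕ) = p → (j : ℕ) + p = n → ξ i * ξ j = 1 := by
    intro p hp hA hB i j hvi hvj
    have hPne : a^(2*p) * (c * (b - a)) ≠ 0 :=
      mul_ne_zero (pow_ne_zero _ ha) (mul_ne_zero hc hba)
    have hiW : i ∈ stmt8W n p := stmt8W_mem.mpr ⟨by omega, by omega⟩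
    have hjW : j ∈ stmt8W n p := stmt8W_mem.mpr ⟨by omega, by omega⟩
    rcases eq_or_lt_of_le hp with heq | hlt
    · -- center case
      have hij : i = j := Fin.ext (by omega)
      subst hij
      have hsingle : stmt8W n p = {i} := stmt8W_single heq i hvi
      have hA' := hA i hiW
      have hB' := hB i hiW i hiW
      rw [hsingle, Finset.sum_singleton] at hA' hB'
      rw [hs2 i (by omega)] at hA' hB'
      rw [if_pos rfl] at hB'
      have hx : (b - a) * (a^(2*p) * c * (ξ i * ξ i) - 1) = 0 := by linear_combination -hB'
      have h1 : a^(2*p) * c * (ξ i * ξ i) = 1 := by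
        rcases mul_eq_zero.mp hx with h | h
        · exact absurd h hba
        · exact sub_eq_zero.mp h
      have hxne : ξ i ≠ 0 := by
        intro h0
        rw [h0] at h1
        simp at h1
      have h2 : a^(2*p) * c = 1 := by
        have hx2 : (a^(2*p) * c - 1) * ξ i = 0 := by linear_combination -hA'
        rcases mul_eq_zero.mp hx2 with h | h
        · exact sub_eq_zero.mp h
        · exact absurd h hxne
      rw [h2, one_mul] at h1
      exact h1
    · -- off-center case
      have hij : (i : ℕ) ≠ (j : ℕ) := by omega
      have hijF : i ≠ j := fun h => hij (congrArg Fin.val h)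
      have hSii : S i i = 0 := hs0 i i (by omega)
      have hSij : S i j = b := hs1 i j (by omega) hij
      have hSji : S j i = b := by rw [hsym j i]; exact hSij
      have hA' := hA i hiW
      rw [stmt8W_split hlt i j hvi hvj (fun k => S i k * ξ k)] at hA'
      have hrest1 : ∑ k ∈ stmt8W n (p+1), S i k * ξ k = 0 :=
        Finset.sum_eq_zero fun k hk => by
          rw [hs0 i k (by have := stmt8W_mem.mp hk; omega), zero_mul]
      rw [hSii, hSij, hrest1] at hA'
      have hB' := hB i hiW i hiW
      rw [stmt8W_split hlt i j hvi hvj (fun k => S i k * S k i)] at hB'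
      have hrest2 : ∑ k ∈ stmt8W n (p+1), S i k * S k i = 0 :=
        Finset.sum_eq_zero fun k hk => by
          rw [hs0 i k (by have := stmt8W_mem.mp hk; omega), zero_mul]
      rw [hSii, hSij, hSji, hrest2, if_pos rfl] at hB'
      have hgoal : (a^(2*p) * (c * (b - a))) * (ξ i * ξ j - 1) = 0 := by
        linear_combination (a*a^(2*p)*c*(b-a)*ξ i) * hA' - (a*a^(2*p)*c) * hB'
          + (a^(2*p)*c*b - a^(2*p)*c*(b-a)*(ξ i * ξ j)) * hab
      rcases mul_eq_zero.mp hgoal with h | h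
      · exact absurd h hPne
      · exact sub_eq_zero.mp h
  have key : ∀ p : ℕ, 2*p ≤ n →
      (∀ i ∈ stmt8W n p, ∑ j ∈ stmt8W n p, S i j * ξ j = a^(2*p) * c * ξ i) ∧
      (∀ i ∈ stmt8W n p, ∀ j ∈ stmt8W n p, ∑ k ∈ stmt8W n p, S i k * S k j
        = (a - b) * S i j + (if i = j then 1 else 0) + a^(2*p) * (c * (b - a)) * (ξ i * ξ j)) := by
    intro p
    induction p with
    | zero =>
      intro _
      constructor
      · intro i _
        rw [stmt8W_zero]
        simpa using heig i
      · intro i _ j _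
        rw [stmt8W_zero]
        simpa using hrank i j
    | succ q ih =>
      intro hq1
      have hlt : 2*q < n := by omega
      obtain ⟨Aq, Bq⟩ := ih (by omega)
      have hq2 : q < n + 1 := by omega
      have hq3 : n - q < n + 1 := by omega
      set lo : Fin (n+1) := ⟨q, hq2⟩ with hlodef
      set hi : Fin (n+1) := ⟨n - q, hq3⟩ with hhidef
      have hvlo : (lo : ℕ) = q := rfl
      have hvhi : (hi : ℕ) + q = n := by
        show n - q + q = n
        omega
      have hsub : ∀ k : Fin (n+1), k ∈ stmt8W n (q+1) → k ∈ stmt8W n q := by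
        intro k hk
        have := stmt8W_mem.mp hk
        exact stmt8W_mem.mpr ⟨by omega, by omega⟩
      have hloW : lo ∈ stmt8W n q := stmt8W_mem.mpr ⟨by omega, by omega⟩
      have hhiW : hi ∈ stmt8W n q := stmt8W_mem.mpr ⟨by omega, by omega⟩
      have hCq : ξ lo * ξ hi = 1 := stepC q (by omega) Aq Bq lo hi hvlo hvhi
      have hloij : (lo : ℕ) ≠ (hi : ℕ) := by omega
      have hSll : S lo lo = 0 := hs0 lo lo (by omega)
      have hSlh : S lo hi = b := hs1 lo hi (by omega) hloij
      have hShl : S hi lo = b := by rw [hsym hi lo]; exact hSlh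
      have hBll := Bq lo hloW lo hloW
      rw [stmt8W_split hlt lo hi hvlo hvhi (fun k => S lo k * S k lo)] at hBll
      have hr2 : ∑ k ∈ stmt8W n (q+1), S lo k * S k lo = 0 :=
        Finset.sum_eq_zero fun k hk => by
          rw [hs0 lo k (by have := stmt8W_mem.mp hk; omega), zero_mul]
      rw [hSll, hSlh, hShl, hr2, if_pos rfl] at hBll
      have hcol : ∀ k : Fin (n+1), k ∈ stmt8W n (q+1) →
          S k hi = a * (a^(2*q) * (c * (b - a))) * (ξ lo * ξ k) := by
        intro k hk
        have hkm := stmt8W_mem.mp hk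
        have hklo : k ≠ lo := by
          intro h; rw [h] at hkm; omega
        have hBk := Bq k (hsub k hk) lo hloW
        rw [stmt8W_split hlt lo hi hvlo hvhi (fun j => S k j * S j lo)] at hBk
        have hrk : ∑ j ∈ stmt8W n (q+1), S k j * S j lo = 0 :=
          Finset.sum_eq_zero fun j hj => by
            rw [hs0 j lo (by have := stmt8W_mem.mp hj; omega), mul_zero]
        have hSkl : S k lo = 0 := hs0 k lo (by omega)
        rw [hSll, hShl, hSkl, hrk, if_neg hklo] at hBk
        linear_combination a * hBk - S k hi * hab
      have hpow : a^(2*(q+1)) = a^(2*q) * (a*a) := by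
        rw [show 2*(q+1) = 2*q + 1 + 1 by ring, pow_succ, pow_succ, mul_assoc]
      constructor
      · intro i hiw
        have hii := stmt8W_mem.mp hiw
        have hAi := Aq i (hsub i hiw)
        rw [stmt8W_split hlt lo hi hvlo hvhi (fun j => S i j * ξ j)] at hAi
        have hSil : S i lo = 0 := hs0 i lo (by omega)
        have hSih := hcol i hiw
        rw [hSil, hSih] at hAi
        rw [hpow]
        linear_combination hAi - (a*a^(2*q)*c*(b-a)*ξ i) * hCq - (a^(2*q)*c*ξ i) * hab
      · intro i hiw j hjw
        have hii := stmt8W_mem.mp hiw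
        have hjj := stmt8W_mem.mp hjw
        have hBij := Bq i (hsub i hiw) j (hsub j hjw)
        rw [stmt8W_split hlt lo hi hvlo hvhi (fun k => S i k * S k j)] at hBij
        have hSil : S i lo = 0 := hs0 i lo (by omega)
        have hSlj : S lo j = 0 := hs0 lo j (by omega)
        have hSih := hcol i hiw
        have hShj : S hi j = a * (a^(2*q) * (c * (b - a))) * (ξ lo * ξ j) := by
          rw [hsym hi j]; exact hcol j hjw
        rw [hSil, hSlj, hSih, hShj] at hBij
        rw [hpow]
        linear_combination hBij + (a*a*(a^(2*q)*(c*(b-a)))*(ξ i*ξ j)) * hBll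
          - ((a^(2*q)*(c*(b-a)))*(ξ i*ξ j)*(a*b+1)) * hab
  intro i j hij
  rcases le_total (i : ℕ) (j : ℕ) with h | h
  · exact stepC (i : ℕ) (by omega) ((key _ (by omega)).1) ((key _ (by omega)).2) i j rfl (by omega)
  · rw [mul_comm]
    exact stepC (j : ℕ) (by omega) ((key _ (by omega)).1) ((key _ (by omega)).2) j i rfl (by omega)

set_option maxHeartbeats 1000000 in
/-- Under the hypotheses of the previous lemma, if in addition `S` has the
anti-triangular shape (`S_{i,j} = 0` above the anti-diagonal, `S = a⁻¹` on the
off-center anti-diagonal, and `S = 1` at the center; 1-based indices translated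
to 0-based ones), then `ξ_i · ξ_{l+1-i} = 1` for every `i`. -/
theorem stmt8 {K : Type*} [Field K] (l m : ℕ) (hl : 1 ≤ l) (hm : m ≤ l - 1)
    (a c : K) (ha : a ≠ 0) (hc : c ≠ 0) (ha2 : a ^ 2 ≠ 1) (hca : c ≠ a) (hca' : c ≠ -a⁻¹)
    (T S : Matrix (Fin l) (Fin l) K)
    (hT : T * T.transpose = 1)
    (hS : S = T * Matrix.diagonal
      (fun i : Fin l => if (i : ℕ) < m then a else if (i : ℕ) < l - 1 then -a⁻¹ else c) *
        T.transpose)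
    (ξ : Fin l → K)
    (hξ : S.mulVec ξ = c • ξ)
    (hnorm : ∑ i, ξ i ^ 2 = 1 - (c - c⁻¹) / (a - a⁻¹))
    (hne : 1 - (c - c⁻¹) / (a - a⁻¹) ≠ 0)
    (hshape0 : ∀ i j : Fin l, (i : ℕ) + (j : ℕ) + 1 < l → S i j = 0)
    (hshape1 : ∀ i j : Fin l, (i : ℕ) + (j : ℕ) + 1 = l → (i : ℕ) ≠ (j : ℕ) → S i j = a⁻¹)
    (hshape2 : ∀ i : Fin l, 2 * (i : ℕ) + 1 = l → S i i = 1) :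
    ∀ i j : Fin l, (i : ℕ) + (j : ℕ) + 1 = l → ξ i * ξ j = 1 := by
  obtain ⟨n, rfl⟩ : ∃ n, l = n + 1 := ⟨l - 1, by omega⟩
  have hm' : m ≤ n := by omega
  have hab' : a * a⁻¹ = 1 := mul_inv_cancel₀ ha
  have hamin : a - a⁻¹ ≠ 0 := by
    intro h
    apply ha2
    have h' : a = a⁻¹ := sub_eq_zero.mp h
    calc a^2 = a * a := sq a
      _ = a * a⁻¹ := by rw [← h']
      _ = 1 := hab'
  have hbma : a⁻¹ - a ≠ 0 := fun h => hamin (by linear_combination -h)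
  -- the diagonal vector
  set d : Fin (n+1) → K :=
    (fun i : Fin (n+1) => if (i : ℕ) < m then a else if (i : ℕ) < n + 1 - 1 then -a⁻¹ else c)
    with hd
  have hS' : S = T * Matrix.diagonal d * T.transpose := hS
  have hdlast : d (Fin.last n) = c := by
    have h1 : ¬ ((Fin.last n : ℕ) < m) := by simp [Fin.val_last]; omega
    have h2 : ¬ ((Fin.last n : ℕ) < n + 1 - 1) := by simp [Fin.val_last]
    rw [hd]
    simp only [if_neg h1, if_neg h2]
  have hklast : ∀ k : Fin (n+1), k ≠ Fin.last n → (k : ℕ) < n := by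
    intro k hk
    have h1 := k.isLt
    have h2 : (k : ℕ) ≠ n := by
      intro h
      exact hk (Fin.ext (by simp [Fin.val_last, h]))
    omega
  have hdeig : ∀ k : Fin (n+1), k ≠ Fin.last n → (d k - a) * (d k + a⁻¹) = 0 := by
    intro k hk
    by_cases h1 : (k : ℕ) < m
    · rw [show d k = a from by rw [hd]; simp only [if_pos h1]]
      ring
    · rw [show d k = -a⁻¹ from by
        rw [hd]; simp only [if_neg h1, if_pos (show (k:ℕ) < n + 1 - 1 by
          have := hklast k hk; omega)]]
      ring
  have hdc : ∀ k : Fin (n+1), k ≠ Fin.last n → d k - c ≠ 0 := by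
    intro k hk
    by_cases h1 : (k : ℕ) < m
    · rw [show d k = a from by rw [hd]; simp only [if_pos h1]]
      exact sub_ne_zero.mpr (Ne.symm hca)
    · rw [show d k = -a⁻¹ from by
        rw [hd]; simp only [if_neg h1, if_pos (show (k:ℕ) < n + 1 - 1 by
          have := hklast k hk; omega)]]
      exact sub_ne_zero.mpr (Ne.symm hca')
  -- matrix entry computations
  have hT' : T.transpose * T = 1 := mul_eq_one_comm.mp hT
  have hent : ∀ (e : Fin (n+1) → K) (i j : Fin (n+1)),
      (T * Matrix.diagonal e * T.transpose) i j = ∑ k, T i k * (e k * T j k) := by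
    intro e i j
    rw [Matrix.mul_apply]
    refine Finset.sum_congr rfl fun k _ => ?_
    rw [Matrix.mul_diagonal, Matrix.transpose_apply]
    ring
  have hSe : ∀ i j, S i j = ∑ k, T i k * (d k * T j k) := by
    intro i j
    rw [hS']
    exact hent d i j
  have hsym' : ∀ i j, S i j = S j i := by
    intro i j
    rw [hSe i j, hSe j i]
    exact Finset.sum_congr rfl fun k _ => by ring
  have hSS : S * S = T * Matrix.diagonal (fun k => d k * d k) * T.transpose := by
    rw [hS']
    have h1 : T * Matrix.diagonal d * T.transpose * (T * Matrix.diagonal d * T.transpose)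
        = T * Matrix.diagonal d * ((T.transpose * T) * (Matrix.diagonal d * T.transpose)) := by
      simp only [Matrix.mul_assoc]
    rw [h1, hT', Matrix.one_mul, ← Matrix.mul_assoc,
      Matrix.mul_assoc T, Matrix.diagonal_mul_diagonal]
  have hS2e : ∀ i j, ∑ k, S i k * S k j = ∑ k, T i k * (d k * d k * T j k) := by
    intro i j
    rw [← Matrix.mul_apply, hSS]
    exact hent _ i j
  have hTTe : ∀ i j : Fin (n+1), (if i = j then (1:K) else 0) = ∑ k, T i k * T j k := by
    intro i j
    have h : (T * T.transpose) i j = (1 : Matrix (Fin (n+1)) (Fin (n+1)) K) i j := by rw [hT]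
    rw [Matrix.mul_apply] at h
    simp only [Matrix.transpose_apply, Matrix.one_apply] at h
    exact h.symm
  have htl : ∑ k, T k (Fin.last n) * T k (Fin.last n) = 1 := by
    have h : (T.transpose * T) (Fin.last n) (Fin.last n)
        = (1 : Matrix (Fin (n+1)) (Fin (n+1)) K) (Fin.last n) (Fin.last n) := by rw [hT']
    rw [Matrix.mul_apply] at h
    simp only [Matrix.transpose_apply, Matrix.one_apply_eq] at h
    exact h
  -- the rank-one identity with the last column of T
  have hM : ∀ i j, ∑ k, S i k * S k j = (a - a⁻¹) * S i j + (if i = j then 1 else 0)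
      + ((c - a) * (c + a⁻¹)) * (T i (Fin.last n) * T j (Fin.last n)) := by
    intro i j
    rw [hS2e i j, hSe i j, hTTe i j]
    have hmu : ((c - a) * (c + a⁻¹)) * (T i (Fin.last n) * T j (Fin.last n))
        = ∑ k, (if k = Fin.last n then ((c - a) * (c + a⁻¹)) * (T i k * T j k) else 0) := by
      rw [Finset.sum_ite_eq' Finset.univ (Fin.last n)
        (fun k => ((c - a) * (c + a⁻¹)) * (T i k * T j k))]
      simp
    rw [hmu, Finset.mul_sum, ← Finset.sum_add_distrib, ← Finset.sum_add_distrib]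
    refine Finset.sum_congr rfl fun k _ => ?_
    by_cases hk : k = Fin.last n
    · subst hk
      rw [if_pos rfl, hdlast]
      linear_combination (T i (Fin.last n) * T j (Fin.last n)) * hab'
    · rw [if_neg hk]
      linear_combination (T i k * T j k) * (hdeig k hk) + (T i k * T j k) * hab'
  -- the eigenvector is proportional to the last column of T
  have hweq : ∀ k, d k * (T.transpose.mulVec ξ) k = c * (T.transpose.mulVec ξ) k := by
    have h6 : T.transpose.mulVec (S.mulVec ξ) = T.transpose.mulVec (c • ξ) := by rw [hξ]
    rw [Matrix.mulVec_smul, Matrix.mulVec_mulVec] at h6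
    have h7 : T.transpose * S = Matrix.diagonal d * T.transpose := by
      rw [hS']
      have h8 : T.transpose * (T * Matrix.diagonal d * T.transpose)
          = (T.transpose * T) * (Matrix.diagonal d * T.transpose) := by
        simp only [Matrix.mul_assoc]
      rw [h8, hT', Matrix.one_mul]
    rw [h7, ← Matrix.mulVec_mulVec] at h6
    intro k
    have h9 := congrFun h6 k
    simpa [Matrix.mulVec_diagonal] using h9
  have hw0 : ∀ k, k ≠ Fin.last n → (T.transpose.mulVec ξ) k = 0 := by
    intro k hk
    have h9 : (d k - c) * (T.transpose.mulVec ξ) k = 0 := by linear_combination hweq k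
    rcases mul_eq_zero.mp h9 with h | h
    · exact absurd h (hdc k hk)
    · exact h
  have hxi : ∀ i, ξ i = (T.transpose.mulVec ξ) (Fin.last n) * T i (Fin.last n) := by
    have h8 : T.mulVec (T.transpose.mulVec ξ) = ξ := by
      rw [Matrix.mulVec_mulVec, hT, Matrix.one_mulVec]
    intro i
    calc ξ i = T.mulVec (T.transpose.mulVec ξ) i := (congrFun h8 i).symm
      _ = ∑ k, T i k * (T.transpose.mulVec ξ) k := rfl
      _ = T i (Fin.last n) * (T.transpose.mulVec ξ) (Fin.last n) := by
          rw [Finset.sum_eq_single (Fin.last n)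
            (fun k _ hk => by rw [hw0 k hk, mul_zero]) (by simp)]
      _ = (T.transpose.mulVec ξ) (Fin.last n) * T i (Fin.last n) := by ring
  have hb2 : (T.transpose.mulVec ξ) (Fin.last n) * (T.transpose.mulVec ξ) (Fin.last n)
      = 1 - (c - c⁻¹) / (a - a⁻¹) := by
    rw [← hnorm]
    symm
    calc ∑ i, ξ i ^ 2
        = ∑ i, ((T.transpose.mulVec ξ) (Fin.last n) * (T.transpose.mulVec ξ) (Fin.last n))
            * (T i (Fin.last n) * T i (Fin.last n)) := by
          refine Finset.sum_congr rfl fun i _ => ?_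
          rw [hxi i]; ring
      _ = ((T.transpose.mulVec ξ) (Fin.last n) * (T.transpose.mulVec ξ) (Fin.last n))
            * ∑ i, T i (Fin.last n) * T i (Fin.last n) := by rw [Finset.mul_sum]
      _ = (T.transpose.mulVec ξ) (Fin.last n) * (T.transpose.mulVec ξ) (Fin.last n) := by
          rw [htl, mul_one]
  have hkey : (c - a) * (c + a⁻¹)
      = c * (a⁻¹ - a) * ((T.transpose.mulVec ξ) (Fin.last n) * (T.transpose.mulVec ξ) (Fin.last n)) := by
    rw [hb2]
    have hcc : c * c⁻¹ = 1 := mul_inv_cancel₀ hc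
    have e1 : (c - c⁻¹) / (a - a⁻¹) * (a - a⁻¹) = c - c⁻¹ := div_mul_cancel₀ _ hamin
    linear_combination (-c) * e1 + hcc - hab'
  have hrank : ∀ i j, ∑ k, S i k * S k j
      = (a - a⁻¹) * S i j + (if i = j then 1 else 0) + c * (a⁻¹ - a) * (ξ i * ξ j) := by
    intro i j
    rw [hM i j, hxi i, hxi j]
    linear_combination (T i (Fin.last n) * T j (Fin.last n)) * hkey
  have heig' : ∀ i, ∑ j, S i j * ξ j = c * ξ i := by
    intro i
    have h := congrFun hξ i
    simpa [Matrix.mulVec, dotProduct] using h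
  intro i j hij
  exact stmt8core a a⁻¹ c hab' hbma hc S ξ hsym' heig' hrank
    (fun i j h => hshape0 i j (by omega)) (fun i j h hne' => hshape1 i j (by omega) hne')
    (fun i h => hshape2 i (by omega)) i j (by omega)
end

section
/- (Even case of the constraint lemma.) Under the stated hypotheses with m even, one has: u_a = γ^{2a−m−1} for m/2 < a ≤ m; u_{m/2} = 1; u_a = γ^{2a−m+1} for 0 ≤ a < m/2; C = γ^m; and β_a = (γ − γ⁻¹)(1 − γ^{2a−m+1}) for every 0 ≤ a < m/2. -/
/-- Even case of the constraint lemma for the fusion/braiding matrices. -/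
theorem stmt9 {K : Type*} [Field K] (m : ℕ) (hm : 2 ≤ m) (hmeven : Even m)
    (γ : K) (hγ : γ ≠ 0) (hγ2 : γ ^ 2 ≠ 1)
    (v w u : ℕ → K)
    (hvw : ∀ a ≤ m, w a * v (m - a) = 1)
    (hu : ∀ a, u a = v a * w a)
    (C : K) (β : ℕ → K)
    (h1 : ∀ a, m / 2 < a → a ≤ m →
      γ * u a + (γ - γ⁻¹) * ∑ e ∈ Finset.range (m - a), u (m - e) = C)
    (h2 : u (m / 2) + (γ - γ⁻¹) * ∑ e ∈ Finset.range (m / 2), u (m - e) = C)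
    (h3 : ∀ a, a < m / 2 →
      γ * u a + (γ - γ⁻¹) * ∑ e ∈ (Finset.range (m - a)).erase a, u (m - e)
        + β a * u (m - a) = C) :
    (∀ a, m / 2 < a → a ≤ m → u a = γ ^ (2 * (a : ℤ) - m - 1)) ∧
    u (m / 2) = 1 ∧
    (∀ a, a < m / 2 → u a = γ ^ (2 * (a : ℤ) - m + 1)) ∧
    C = γ ^ m ∧
    (∀ a, a < m / 2 → β a = (γ - γ⁻¹) * (1 - γ ^ (2 * (a : ℤ) - m + 1))) := by
  obtain ⟨n, rfl⟩ := hmeven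
  have hn : 1 ≤ n := by omega
  have hγγ : γ * γ⁻¹ = 1 := mul_inv_cancel₀ hγ
  rw [show (n + n) / 2 = n from by omega] at h2 h3 ⊢
  -- u n = 1
  have hun : u n = 1 := by
    have h := hvw n (by omega)
    rw [show n + n - n = n from by omega] at h
    rw [hu]; linear_combination h
  -- u a * u (m - a) = 1
  have huinv : ∀ a ≤ n + n, u a * u (n + n - a) = 1 := by
    intro a ha
    have ha1 := hvw a ha
    have ha2 := hvw (n + n - a) (by omega)
    rw [show n + n - (n + n - a) = a from by omega] at ha2
    rw [hu, hu]
    linear_combination (v a * w (n + n - a)) * ha1 + ha2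
  -- upper formula
  have hupper : ∀ k, k < n → u (n + 1 + k) = γ ^ (2 * k + 1) := by
    intro k
    induction k with
    | zero =>
      intro _
      have h1' := h1 (n + 1) (by omega) (by omega)
      rw [show n + n - (n + 1) = n - 1 from by omega] at h1'
      have hs := Finset.sum_range_succ (fun e => u (n + n - e)) (n - 1)
      rw [show n - 1 + 1 = n from by omega, show n + n - (n - 1) = n + 1 from by omega] at hs
      rw [hs, hun] at h2
      simpa using by linear_combination γ * h1' - γ * h2 - u (n + 1) * hγγ
    | succ k ih =>
      intro hk
      have ih' := ih (by omega)
      have ha := h1 (n + 1 + k) (by omega) (by omega)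
      have ha' := h1 (n + 1 + (k + 1)) (by omega) (by omega)
      rw [show n + n - (n + 1 + k) = n - 1 - k from by omega] at ha
      rw [show n + n - (n + 1 + (k + 1)) = n - 2 - k from by omega] at ha'
      have hs := Finset.sum_range_succ (fun e => u (n + n - e)) (n - 2 - k)
      rw [show n - 2 - k + 1 = n - 1 - k from by omega,
        show n + n - (n - 2 - k) = n + 1 + (k + 1) from by omega] at hs
      rw [hs] at ha
      have e : γ * u (n + 1 + k) - γ⁻¹ * u (n + 1 + (k + 1)) = 0 := by
        linear_combination ha - ha'
      linear_combination (-γ) * e - u (n + 1 + (k + 1)) * hγγ + γ ^ 2 * ih'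
  have huA : ∀ a, n < a → a ≤ n + n → u a = γ ^ (2 * (a - n) - 1) := by
    intro a h1a h2a
    have h := hupper (a - n - 1) (by omega)
    rw [show n + 1 + (a - n - 1) = a from by omega] at h
    rw [h]; congr 1; omega
  -- C
  have hC : C = γ ^ (n + n) := by
    have h := h1 (n + n) (by omega) le_rfl
    rw [show n + n - (n + n) = 0 from by omega] at h
    simp only [Finset.range_zero, Finset.sum_empty, mul_zero, add_zero] at h
    rw [← h, huA (n + n) (by omega) le_rfl, ← pow_succ']
    congr 1; omega
  -- lower values
  have hlowval : ∀ a, a < n → u a = (γ ^ (2 * (n - a) - 1))⁻¹ := by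
    intro a ha
    have h := huinv a (by omega)
    rw [huA (n + n - a) (by omega) (by omega),
      show 2 * (n + n - a - n) - 1 = 2 * (n - a) - 1 from by omega] at h
    exact eq_inv_of_mul_eq_one_left (by linear_combination h)
  -- sum formula
  have hT : ∀ k, k < n → (γ - γ⁻¹) * (∑ e ∈ Finset.range (n + 1 + k), u (n + n - e))
      = γ ^ (n + n) + γ - γ⁻¹ - (γ ^ (2 * k))⁻¹ := by
    intro k
    induction k with
    | zero =>
      intro _
      have hs := Finset.sum_range_succ (fun e => u (n + n - e)) n
      rw [show n + n - n = n from by omega, hun] at hs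
      simp only [Nat.add_zero, Nat.mul_zero, pow_zero, inv_one]
      rw [hs]
      linear_combination h2 + hC - hun
    | succ k ih =>
      intro hk
      have ih' := ih (by omega)
      have hs := Finset.sum_range_succ (fun e => u (n + n - e)) (n + 1 + k)
      rw [show n + n - (n + 1 + k) = n - 1 - k from by omega,
        hlowval (n - 1 - k) (by omega),
        show 2 * (n - (n - 1 - k)) - 1 = 2 * k + 1 from by omega] at hs
      rw [show n + 1 + (k + 1) = (n + 1 + k) + 1 from by omega, hs, mul_add, ih']
      field_simp
      ring
  refine ⟨?_, hun, ?_, hC, ?_⟩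
  · intro a h1a h2a
    rw [huA a h1a h2a,
      show 2 * (a : ℤ) - (↑(n + n) : ℤ) - 1 = ((2 * (a - n) - 1 : ℕ) : ℤ) from by
        push_cast; omega,
      zpow_natCast]
  · intro a ha
    rw [hlowval a ha,
      show 2 * (a : ℤ) - (↑(n + n) : ℤ) + 1 = -((2 * (n - a) - 1 : ℕ) : ℤ) from by
        push_cast; omega,
      zpow_neg, zpow_natCast]
  · intro a ha
    have h := h3 a ha
    rw [Finset.sum_erase_eq_sub (by simp; omega : a ∈ Finset.range (n + n - a))] at h
    have hTa := hT (n - 1 - a) (by omega)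
    rw [show n + 1 + (n - 1 - a) = n + n - a from by omega] at hTa
    rw [hlowval a ha, huA (n + n - a) (by omega) (by omega),
      show 2 * (n + n - a - n) - 1 = 2 * (n - a) - 1 from by omega, mul_sub, hTa, hC] at h
    rw [show 2 * (a : ℤ) - (↑(n + n) : ℤ) + 1 = -((2 * (n - a) - 1 : ℕ) : ℤ) from by
        push_cast; omega,
      zpow_neg, zpow_natCast]
    rw [show 2 * (n - a) - 1 = 2 * (n - 1 - a) + 1 from by omega] at h ⊢
    have hne : (γ : K) ^ (2 * (n - 1 - a) + 1) ≠ 0 := pow_ne_zero _ hγ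
    have hconv : (γ ^ (2 * (n - 1 - a)))⁻¹ = γ * (γ ^ (2 * (n - 1 - a) + 1))⁻¹ := by
      rw [pow_succ, mul_inv]
      field_simp
    rw [hconv] at h
    have hXZ : γ ^ (2 * (n - 1 - a) + 1) * (γ ^ (2 * (n - 1 - a) + 1))⁻¹ = 1 :=
      mul_inv_cancel₀ hne
    linear_combination (γ ^ (2 * (n - 1 - a) + 1))⁻¹ * h - (β a - γ + γ⁻¹) * hXZ
end

section
/- (Odd case of the constraint lemma.) Under the stated hypotheses with m odd, setting x := u_{(m+1)/2}, one has: x ≠ 0; u_a = x·γ^{2a−m−1} for all a with m/2 < a ≤ m; u_a = x⁻¹·γ^{2a−m+1} for all a with 0 ≤ a < m/2; C = x·γ^m; and β_a = γ − γ⁻¹ + (γ⁻¹ − x⁻²·γ)·γ^{2a−m+1} for every 0 ≤ a < m/2. -/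
/-- Odd case of the constraint lemma for the fusion/braiding matrices.
Here `x := u_{(m+1)/2}` and the conditions `m/2 < a` and `a < m/2`
(real division, `m` odd) are expressed as `m < 2a` and `2a < m`. -/
theorem stmt10 {K : Type*} [Field K] (m : ℕ) (hm : 1 ≤ m) (hmodd : Odd m)
    (γ : K) (hγ : γ ≠ 0) (hγ2 : γ ^ 2 ≠ 1)
    (v w u : ℕ → K)
    (hvw : ∀ a ≤ m, w a * v (m - a) = 1)
    (hu : ∀ a, u a = v a * w a)
    (C : K) (β : ℕ → K)
    (h1 : ∀ a, m < 2 * a → a ≤ m →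
      γ * u a + (γ - γ⁻¹) * ∑ e ∈ Finset.range (m - a), u (m - e) = C)
    (h2 : ∀ a, 2 * a < m →
      γ * u a + (γ - γ⁻¹) * ∑ e ∈ (Finset.range (m - a)).erase a, u (m - e)
        + β a * u (m - a) = C) :
    u ((m + 1) / 2) ≠ 0 ∧
    (∀ a, m < 2 * a → a ≤ m → u a = u ((m + 1) / 2) * γ ^ (2 * (a : ℤ) - m - 1)) ∧
    (∀ a, 2 * a < m → u a = (u ((m + 1) / 2))⁻¹ * γ ^ (2 * (a : ℤ) - m + 1)) ∧
    C = u ((m + 1) / 2) * γ ^ m ∧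
    (∀ a, 2 * a < m →
      β a = γ - γ⁻¹ + (γ⁻¹ - ((u ((m + 1) / 2))⁻¹) ^ 2 * γ) * γ ^ (2 * (a : ℤ) - m + 1)) := by
  obtain ⟨n, hn⟩ := hmodd
  have hhalf : (m + 1) / 2 = n + 1 := by omega
  rw [hhalf]
  have hγγ : γ * γ⁻¹ = 1 := mul_inv_cancel₀ hγ
  -- nonvanishing of u
  have hune : ∀ a ≤ m, u a ≠ 0 := by
    intro a ha
    have e1 := hvw a ha
    have e2 := hvw (m - a) (Nat.sub_le m a)
    rw [Nat.sub_sub_self ha] at e2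
    rw [hu a]
    intro h
    rcases mul_eq_zero.1 h with h | h
    · rw [h, mul_zero] at e2; exact zero_ne_one e2
    · rw [h, zero_mul] at e1; exact zero_ne_one e1
  have hx0 : u (n + 1) ≠ 0 := hune _ (by omega)
  -- u a * u (m - a) = 1
  have huinv : ∀ a ≤ m, u a * u (m - a) = 1 := by
    intro a ha
    have e1 := hvw a ha
    have e2 := hvw (m - a) (Nat.sub_le m a)
    rw [Nat.sub_sub_self ha] at e2
    rw [hu a, hu (m - a)]
    calc v a * w a * (v (m - a) * w (m - a))
        = w (m - a) * v a * (w a * v (m - a)) := by ring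
      _ = 1 := by rw [e1, e2, mul_one]
  -- upward recursion
  have hrec : ∀ a, m < 2 * a → a < m → u (a + 1) = γ ^ 2 * u a := by
    intro a ha ham
    have e1 := h1 a ha (le_of_lt ham)
    have e2 := h1 (a + 1) (by omega) (by omega)
    rw [show m - a = (m - (a + 1)) + 1 from by omega, Finset.sum_range_succ,
      show m - (m - (a + 1)) = a + 1 from by omega] at e1
    linear_combination γ * (e2 - e1) - u (a + 1) * hγγ
  -- claim 2
  have aux : ∀ k, n + 1 + k ≤ m → u (n + 1 + k) = u (n + 1) * (γ ^ 2) ^ k := by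
    intro k
    induction k with
    | zero => intro _; simp
    | succ k ih =>
      intro hk
      have h' := hrec (n + 1 + k) (by omega) (by omega)
      rw [show n + 1 + (k + 1) = (n + 1 + k) + 1 from by omega, h', ih (by omega)]
      ring
  have hc2 : ∀ a, m < 2 * a → a ≤ m → u a = u (n + 1) * γ ^ (2 * (a : ℤ) - m - 1) := by
    intro a ha ham
    obtain ⟨k, rfl⟩ : ∃ k, a = n + 1 + k := ⟨a - (n + 1), by omega⟩
    rw [aux k ham]
    congr 1
    rw [show (2 * ((n + 1 + k : ℕ) : ℤ) - m - 1) = ((2 * k : ℕ) : ℤ) from by omega,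
      zpow_natCast, pow_mul]
  -- claim 3
  have hc3 : ∀ a, 2 * a < m → u a = (u (n + 1))⁻¹ * γ ^ (2 * (a : ℤ) - m + 1) := by
    intro a ha
    have hma := hc2 (m - a) (by omega) (Nat.sub_le m a)
    have hinv := huinv a (by omega)
    rw [mul_comm] at hinv
    have : u a = (u (m - a))⁻¹ := eq_inv_of_mul_eq_one_right hinv
    rw [this, hma, show (2 * ((m - a : ℕ) : ℤ) - m - 1) = -(2 * (a : ℤ) - m + 1) from by omega,
      zpow_neg, mul_inv, inv_inv]
  -- claim 4
  have hC : C = u (n + 1) * γ ^ m := by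
    have e4 := h1 m (by omega) le_rfl
    rw [Nat.sub_self] at e4
    simp only [Finset.range_zero, Finset.sum_empty, mul_zero, add_zero] at e4
    rw [← e4, hc2 m (by omega) le_rfl,
      show (γ : K) ^ m = γ ^ (m : ℤ) from (zpow_natCast γ m).symm,
      show (m : ℤ) = (2 * (m : ℤ) - m - 1) + 1 from by ring, zpow_add₀ hγ, zpow_one]
    ring_nf
  -- base case for β
  have hbase : β n * u (n + 1) = γ * u (n + 1) - γ * u n := by
    have e5 := h2 n (by omega)
    have e6 := h1 (n + 1) (by omega) (by omega)
    rw [show m - n = n + 1 from by omega] at e5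
    rw [show m - (n + 1) = n from by omega] at e6
    have hsplit := Finset.sum_erase_add (Finset.range (n + 1)) (fun e => u (m - e))
      (Finset.self_mem_range_succ n)
    rw [Finset.sum_range_succ] at hsplit
    have hS : ∑ e ∈ (Finset.range (n + 1)).erase n, u (m - e)
        = ∑ e ∈ Finset.range n, u (m - e) := by
      exact add_right_cancel hsplit
    rw [hS] at e5
    linear_combination e5 - e6
  -- β by downward induction
  have hbeta : ∀ j, ∀ a, 2 * a < m → a + j = n →
      β a = γ - γ⁻¹ + (γ⁻¹ - ((u (n + 1))⁻¹) ^ 2 * γ) * γ ^ (2 * (a : ℤ) - m + 1) := by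
    intro j
    induction j with
    | zero =>
      intro a ha hj
      have han : a = n := by omega
      subst han
      have hun : u a = (u (a + 1))⁻¹ := by
        rw [hc3 a ha, show (2 * (a : ℤ) - m + 1) = 0 from by omega, zpow_zero, mul_one]
      refine mul_right_cancel₀ hx0 ?_
      rw [hbase, hun, show (2 * (a : ℤ) - m + 1) = 0 from by omega, zpow_zero]
      field_simp
      ring
    | succ j ih =>
      intro a ha hj
      have ha1 : 2 * (a + 1) < m := by omega
      have e_a := h2 a ha
      have e_a1 := h2 (a + 1) ha1
      have f1 := Finset.sum_erase_add (Finset.range (m - a)) (fun e => u (m - e))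
        (Finset.mem_range.2 (by omega : a < m - a))
      have f2 := Finset.sum_erase_add (Finset.range (m - (a + 1))) (fun e => u (m - e))
        (Finset.mem_range.2 (by omega : a + 1 < m - (a + 1)))
      have f3 : ∑ e ∈ Finset.range (m - a), u (m - e)
          = (∑ e ∈ Finset.range (m - (a + 1)), u (m - e)) + u (a + 1) := by
        rw [show m - a = (m - (a + 1)) + 1 from by omega, Finset.sum_range_succ,
          show m - (m - (a + 1)) = a + 1 from by omega]
      have keyA : β a * u (m - a) = β (a + 1) * u (m - (a + 1)) + γ * u (a + 1) - γ * u a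
          + (γ - γ⁻¹) * (u (m - a) - u (a + 1) - u (m - (a + 1))) := by
        linear_combination e_a - e_a1 - (γ - γ⁻¹) * f1 + (γ - γ⁻¹) * f2 - (γ - γ⁻¹) * f3
      have hb1 := ih (a + 1) ha1 (by omega)
      have hgne : γ ^ (2 * (a : ℤ) - m + 1) ≠ 0 := zpow_ne_zero _ hγ
      have hUne : u (m - a) ≠ 0 := hune _ (Nat.sub_le m a)
      have hua : u a = (u (n + 1))⁻¹ * γ ^ (2 * (a : ℤ) - m + 1) := hc3 a ha
      have hua1 : u (a + 1) = (u (n + 1))⁻¹ * (γ ^ (2 * (a : ℤ) - m + 1) * γ ^ (2 : ℤ)) := by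
        rw [hc3 (a + 1) ha1,
          show (2 * ((a + 1 : ℕ) : ℤ) - m + 1) = (2 * (a : ℤ) - m + 1) + 2 from by omega,
          zpow_add₀ hγ]
      have hU : u (m - a) = u (n + 1) * (γ ^ (2 * (a : ℤ) - m + 1))⁻¹ := by
        rw [hc2 (m - a) (by omega) (Nat.sub_le m a),
          show (2 * ((m - a : ℕ) : ℤ) - m - 1) = -(2 * (a : ℤ) - m + 1) from by omega,
          zpow_neg]
      have hU1 : u (m - (a + 1))
          = u (n + 1) * ((γ ^ (2 * (a : ℤ) - m + 1))⁻¹ * γ ^ (-2 : ℤ)) := by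
        rw [hc2 (m - (a + 1)) (by omega) (Nat.sub_le m (a + 1)),
          show (2 * ((m - (a + 1) : ℕ) : ℤ) - m - 1) = -(2 * (a : ℤ) - m + 1) + (-2) from by
            omega,
          zpow_add₀ hγ, zpow_neg]
      rw [show (2 * ((a + 1 : ℕ) : ℤ) - m + 1) = (2 * (a : ℤ) - m + 1) + 2 from by omega,
        zpow_add₀ hγ] at hb1
      refine mul_right_cancel₀ hUne ?_
      have h2' : γ ^ (2 : ℤ) = γ * γ := by
        rw [show (2 : ℤ) = 1 + 1 from rfl, zpow_add₀ hγ, zpow_one]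
      have hm2' : γ ^ (-2 : ℤ) = (γ * γ)⁻¹ := by
        rw [show (-2 : ℤ) = -(1 + 1) from rfl, zpow_neg, zpow_add₀ hγ, zpow_one]
      rw [keyA, hb1, hua, hua1, hU, hU1, h2', hm2']
      generalize hgdef : γ ^ (2 * (a : ℤ) - ↑m + 1) = g
      rw [hgdef] at hgne
      generalize hxdef : u (n + 1) = x
      linear_combination (γ⁻¹ * x * g * g⁻¹ + γ * x⁻¹ * g - γ * x * x⁻¹ ^ 2 * g * g⁻¹
        + γ * γ⁻¹ ^ 2 * x * g * g⁻¹ - γ ^ 2 * γ⁻¹ * x * x⁻¹ ^ 2 * g * g⁻¹) * hγγ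
  refine ⟨hx0, hc2, hc3, hC, fun a ha => hbeta (n - a) a ha (by omega)⟩
end

section
/- Let N be the (2n+1)×(2n+1) matrix over K defined by N_{b,a} = B^{(2n−b) b}_{a (2n−a)} for a, b ∈ {0, ..., 2n}, i.e. the matrix of the braiding B on its invariant subspace with basis {e_{(a, 2n−a)} : 0 ≤ a ≤ 2n}. Then Tr N = n·(u⁻² − u²) + u^{4n} and det N = (−1)^n · u^{4n}. (In the variable q = u⁴ this reads Tr = n(q^{−1/2} − q^{1/2}) + q^n and det = (−1)^n q^n.) -/
noncomputable section

/-- The coefficient field `K = ℚ(u)`, the field of rational functions in `u`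
over `ℚ` (`u` plays the role of `q^{1/4}`, `q = u⁴`). -/
abbrev FK : Type := RatFunc ℚ

/-- The variable `u` of `K = ℚ(u)`. -/
def U : FK := RatFunc.X

/-- The fusion matrix `M` of the fundamental `(2n+1)`-dimensional representation
of `B_n`: `M_{a,b} = 0` if `b ≠ 2n - a`, and `M_{a,2n-a} = u^{2(n-a)-1}` for
`a < n`, `M_{n,n} = 1`, `M_{a,2n-a} = u^{2(n-a)+1}` for `a > n`. -/
def MB (n a b : ℕ) : FK :=
  if a + b = 2 * n then
    if a < n then U ^ (2 * ((n : ℤ) - a) - 1)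
    else if a = n then 1
    else U ^ (2 * ((n : ℤ) - a) + 1)
  else 0

/-- The leading coefficients `c_a` of the braiding on the `a + c = 2n` block:
`c_n = 1` and `c_a = u²` for `a ≠ n`. -/
def cB (n a : ℕ) : FK := if a = n then 1 else U ^ (2 : ℤ)

/-- The wall-crossing coefficients `β_a^b` (`a < b`) of the braiding matrix
of `B_n`. -/
def betaB (n a b : ℕ) : FK :=
  if 0 < ((a : ℤ) - n) * ((b : ℤ) - n) then
    (U ^ (2 : ℤ) - U ^ (-2 : ℤ)) * U ^ (2 * ((b : ℤ) - a))
  else if ((a : ℤ) - n) * ((b : ℤ) - n) = 0 then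
    (U ^ (2 : ℤ) - U ^ (-2 : ℤ)) * U ^ (2 * ((b : ℤ) - a) - 1)
  else
    (U ^ (2 : ℤ) - U ^ (-2 : ℤ)) * U ^ (2 * ((b : ℤ) - a) - 2) +
      (if a + b = 2 * n then U ^ (-2 : ℤ) - U ^ (2 : ℤ) else 0)

/-- Coefficients of the braiding matrix of `B_n`:
`BB n b d a c = B^{bd}_{ac}`, the coefficient of `e_{(b,d)}` in `B e_{(a,c)}`.
For `a + c ≠ 2n`: `B e_{(a,c)} = u⁻² e_{(a,c)}` if `a = c`,
`B e_{(a,c)} = e_{(c,a)}` if `a > c`, and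
`B e_{(a,c)} = e_{(c,a)} + (u⁻² - u²) e_{(a,c)}` if `a < c`.
For `a + c = 2n`: `B e_{(a,2n-a)} = c_a e_{(2n-a,a)} + Σ_{b=a+1}^{2n} β_a^b e_{(2n-b,b)}`. -/
def BB (n b d a c : ℕ) : FK :=
  if a + c = 2 * n then
    if b + d = 2 * n then
      if d = a then cB n a else if a < d then betaB n a d else 0
    else 0
  else if a = c then (if b = a ∧ d = c then U ^ (-2 : ℤ) else 0)
  else if c < a then (if b = c ∧ d = a then 1 else 0)
  else (if b = c ∧ d = a then (1 : FK) else 0) +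
    (if b = a ∧ d = c then U ^ (-2 : ℤ) - U ^ (2 : ℤ) else 0)

/-- The braiding matrix `B` of `B_n` as a matrix indexed by pairs `(a, c)`,
with `BmatB n (b, d) (a, c) = B^{bd}_{ac}`. -/
def BmatB (n : ℕ) :
    Matrix (Fin (2 * n + 1) × Fin (2 * n + 1)) (Fin (2 * n + 1) × Fin (2 * n + 1)) FK :=
  Matrix.of fun p q => BB n p.1 p.2 q.1 q.2

/-- The matrix of the braiding `B` of `B_n` on its invariant subspace with
basis `{e_{(a, 2n-a)} : 0 ≤ a ≤ 2n}`. -/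
def NB (n : ℕ) : Matrix (Fin (2 * n + 1)) (Fin (2 * n + 1)) FK :=
  Matrix.of fun b a => BB n b (2 * n - (b : ℕ)) a (2 * n - (a : ℕ))


section Aux

open Finset Equiv Equiv.Perm

lemma hU : (U : FK) ≠ 0 := RatFunc.X_ne_zero

lemma NB_apply (n : ℕ) (b a : Fin (2*n+1)) :
    NB n b a = if 2*n - (b:ℕ) = (a:ℕ) then cB n a
      else if (a:ℕ) < 2*n - (b:ℕ) then betaB n a (2*n - (b:ℕ)) else 0 := by
  have ha : (a:ℕ) ≤ 2*n := Nat.lt_succ_iff.mp a.isLt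
  have hb : (b:ℕ) ≤ 2*n := Nat.lt_succ_iff.mp b.isLt
  show BB n b (2*n - (b:ℕ)) a (2*n - (a:ℕ)) = _
  unfold BB
  rw [if_pos (by omega), if_pos (by omega)]

lemma NB_diag (n : ℕ) (a : Fin (2*n+1)) :
    NB n a a = if (a:ℕ) = n then 1
      else if (a:ℕ) < n then
        (U ^ (2:ℤ) - U ^ (-2:ℤ)) * U ^ (4*((n:ℤ) - (a:ℕ)) - 2) + (U ^ (-2:ℤ) - U ^ (2:ℤ))
      else 0 := by
  have ha : (a:ℕ) ≤ 2*n := Nat.lt_succ_iff.mp a.isLt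
  rw [NB_apply]
  by_cases h1 : (a:ℕ) = n
  · rw [if_pos (by omega), if_pos h1]
    simp [cB, h1]
  · rw [if_neg (by omega), if_neg h1]
    by_cases h2 : (a:ℕ) < n
    · rw [if_pos (by omega), if_pos h2]
      unfold betaB
      have hcast : ((2*n - (a:ℕ) : ℕ) : ℤ) = 2*(n:ℤ) - (a:ℕ) := by omega
      rw [if_neg, if_neg, if_pos (by omega)]
      · rw [hcast]
        ring_nf
      · rw [hcast]; nlinarith [h2, ha]
      · rw [hcast]; push_neg; nlinarith [h2]
    · rw [if_neg (by omega), if_neg h2]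

lemma trace_NB (n : ℕ) :
    (NB n).trace = (n : FK) * (U ^ (-2 : ℤ) - U ^ (2 : ℤ)) + U ^ (4 * (n : ℤ)) := by
  set g : ℕ → FK := fun v => if v = n then 1
      else if v < n then
        (U ^ (2:ℤ) - U ^ (-2:ℤ)) * U ^ (4*((n:ℤ) - v) - 2) + (U ^ (-2:ℤ) - U ^ (2:ℤ))
      else 0 with hg
  have key : ∀ v : ℕ, (U ^ (2:ℤ) - U ^ (-2:ℤ)) * U ^ (4*((n:ℤ) - v) - 2)
      = U ^ (4*((n:ℤ) - v)) - U ^ (4*((n:ℤ) - ((v+1:ℕ):ℤ))) := by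
    intro v
    rw [sub_mul, ← zpow_add₀ hU, ← zpow_add₀ hU]
    have e1 : (2:ℤ) + (4*((n:ℤ) - v) - 2) = 4*((n:ℤ) - v) := by ring
    have e2 : (-2:ℤ) + (4*((n:ℤ) - v) - 2) = 4*((n:ℤ) - ((v+1:ℕ):ℤ)) := by push_cast; ring
    rw [e1, e2]
  have htr : (NB n).trace = ∑ a : Fin (2*n+1), NB n a a := by
    simp [Matrix.trace, Matrix.diag]
  have hdiag : ∀ a : Fin (2*n+1), NB n a a = g (a:ℕ) := by
    intro a; rw [hg]; exact NB_diag n a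
  rw [htr, Finset.sum_congr rfl (fun a _ => hdiag a), Fin.sum_univ_eq_sum_range g]
  have hsub : ∑ v ∈ Finset.range (2*n+1), g v = ∑ v ∈ Finset.range (n+1), g v := by
    symm
    apply Finset.sum_subset
    · intro x hx; simp only [Finset.mem_range] at *; omega
    · intro x hx hx'
      simp only [Finset.mem_range, not_lt] at hx hx'
      rw [hg]; simp only
      rw [if_neg (by omega), if_neg (by omega)]
  rw [hsub, Finset.sum_range_succ]
  have hgn : g n = 1 := by rw [hg]; simp
  have hlt : ∀ v ∈ Finset.range n, g v
      = (U ^ (4*((n:ℤ) - v)) - U ^ (4*((n:ℤ) - ((v+1:ℕ):ℤ)))) + (U ^ (-2:ℤ) - U ^ (2:ℤ)) := by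
    intro v hv
    rw [Finset.mem_range] at hv
    rw [hg]; simp only
    rw [if_neg (by omega), if_pos hv, key v]
  rw [hgn, Finset.sum_congr rfl hlt, Finset.sum_add_distrib,
    Finset.sum_range_sub' (fun v : ℕ => U ^ (4*((n:ℤ) - (v:ℕ)))),
    Finset.sum_const, Finset.card_range]
  simp only [Nat.cast_zero, sub_zero, sub_self, mul_zero, zpow_zero, nsmul_eq_mul]
  ring

open Fin.NatCast in
lemma sign_revPerm_odd (n : ℕ) :
    Equiv.Perm.sign (Fin.revPerm : Equiv.Perm (Fin (2*n+1))) = (-1)^n := by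
  set f : ℕ → Equiv.Perm (Fin (2*n+1)) :=
    fun i => Equiv.swap ((i : Fin (2*n+1))) (Fin.rev (i : Fin (2*n+1))) with hf
  have hval : ∀ i : ℕ, i < n → ((i : Fin (2*n+1)) : ℕ) = i := by
    intro i hi; exact Fin.val_cast_of_lt (by omega)
  have hrevval : ∀ a : Fin (2*n+1), ((Fin.rev a : Fin (2*n+1)) : ℕ) = 2*n - (a:ℕ) := by
    intro a; rw [Fin.val_rev]; omega
  have hP : ∀ m, m ≤ n → ∀ a : Fin (2*n+1),
      ((List.range m).map f).prod a
        = if (a:ℕ) < m ∨ 2*n - (a:ℕ) < m then Fin.rev a else a := by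
    intro m
    induction m with
    | zero => intro _ a; simp
    | succ m ih =>
      intro hm a
      have ihm := ih (by omega)
      have ha : (a:ℕ) ≤ 2*n := Nat.lt_succ_iff.mp a.isLt
      rw [List.range_succ, List.map_append, List.prod_append]
      simp only [List.map_cons, List.map_nil, List.prod_cons, List.prod_nil, mul_one]
      rw [Equiv.Perm.mul_apply]
      have hc : ((m : Fin (2*n+1)) : ℕ) = m := hval m (by omega)
      have hr : ((Fin.rev (m : Fin (2*n+1))) : ℕ) = 2*n - m := by
        rw [hrevval, hc]
      by_cases h1 : a = (m : Fin (2*n+1))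
      · subst h1
        rw [hf, Equiv.swap_apply_left, ihm]
        rw [if_neg (by rw [hr]; omega), if_pos (by rw [hc]; omega)]
      · by_cases h2 : a = Fin.rev (m : Fin (2*n+1))
        · subst h2
          rw [hf, Equiv.swap_apply_right, ihm]
          rw [if_neg (by rw [hc]; omega), if_pos (by rw [hr]; omega)]
          exact (Fin.rev_rev _).symm
        · rw [hf, Equiv.swap_apply_of_ne_of_ne h1 h2, ihm]
          have hne1 : (a:ℕ) ≠ m := fun h => h1 (Fin.ext (by rw [hc, h]))
          have hne2 : (a:ℕ) ≠ 2*n - m := fun h => h2 (Fin.ext (by rw [hr, h]))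
          by_cases h3 : (a:ℕ) < m ∨ 2*n - (a:ℕ) < m
          · rw [if_pos h3, if_pos (by omega)]
          · rw [if_neg h3, if_neg (by omega)]
  have hprod : ((List.range n).map f).prod = Fin.revPerm := by
    apply Equiv.ext
    intro a
    have ha : (a:ℕ) ≤ 2*n := Nat.lt_succ_iff.mp a.isLt
    rw [hP n le_rfl a]
    by_cases h : (a:ℕ) < n ∨ 2*n - (a:ℕ) < n
    · rw [if_pos h]; rfl
    · rw [if_neg h]
      have : (a:ℕ) = n := by omega
      show a = Fin.rev a
      apply Fin.ext
      rw [hrevval, this]; omega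
  rw [← hprod]
  rw [Equiv.Perm.sign_prod_list_swap]
  · simp
  · intro g hg
    rw [List.mem_map] at hg
    obtain ⟨i, hi, rfl⟩ := hg
    rw [List.mem_range] at hi
    refine ⟨_, _, ?_, rfl⟩
    intro h
    have := congrArg Fin.val h
    rw [hval i hi, hrevval, hval i hi] at this
    omega

lemma det_NB (n : ℕ) : (NB n).det = (-1) ^ n * U ^ (4 * (n : ℤ)) := by
  set L : Matrix (Fin (2*n+1)) (Fin (2*n+1)) FK := (NB n).submatrix id Fin.revPerm with hL
  have hrevval : ∀ a : Fin (2*n+1), ((Fin.rev a : Fin (2*n+1)) : ℕ) = 2*n - (a:ℕ) := by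
    intro a; rw [Fin.val_rev]; omega
  have hBT : L.BlockTriangular id := by
    intro i j hij
    have hi : (i:ℕ) ≤ 2*n := Nat.lt_succ_iff.mp i.isLt
    have hj : (j:ℕ) ≤ 2*n := Nat.lt_succ_iff.mp j.isLt
    have hij' : (j:ℕ) < (i:ℕ) := hij
    show NB n i (Fin.rev j) = 0
    rw [NB_apply]
    rw [if_neg (by rw [hrevval]; omega), if_neg (by rw [hrevval]; omega)]
  have hdetL : L.det = ∏ a : Fin (2*n+1), cB n (2*n - (a:ℕ)) := by
    rw [Matrix.det_of_upperTriangular hBT]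
    apply Finset.prod_congr rfl
    intro a _
    have ha : (a:ℕ) ≤ 2*n := Nat.lt_succ_iff.mp a.isLt
    show NB n a (Fin.rev a) = _
    rw [NB_apply, if_pos (by rw [hrevval])]
    rw [hrevval]
  have hprodval : (∏ a : Fin (2*n+1), cB n (2*n - (a:ℕ))) = U ^ (4 * (n:ℤ)) := by
    rw [Fin.prod_univ_eq_prod_range (fun v => cB n (2*n - v))]
    have hcongr : ∀ v ∈ Finset.range (2*n+1), cB n (2*n - v)
        = (if v = n then 1 else U ^ (2:ℤ)) := by
      intro v hv
      rw [Finset.mem_range] at hv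
      unfold cB
      by_cases h : v = n
      · rw [if_pos (by omega), if_pos h]
      · rw [if_neg (by omega), if_neg h]
    rw [Finset.prod_congr rfl hcongr,
      ← Finset.mul_prod_erase _ _ (Finset.mem_range.mpr (by omega) : n ∈ Finset.range (2*n+1)),
      if_pos rfl, one_mul,
      Finset.prod_congr rfl (fun v hv => if_neg (Finset.ne_of_mem_erase hv)),
      Finset.prod_const,
      Finset.card_erase_of_mem (Finset.mem_range.mpr (by omega)), Finset.card_range,
      ← zpow_natCast (U ^ (2:ℤ)), ← zpow_mul]
    congr 1
    push_cast
    omega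
  have hperm := Matrix.det_permute' Fin.revPerm (NB n)
  rw [← hL, sign_revPerm_odd n, hdetL, hprodval] at hperm
  have hperm' : U ^ (4*(n:ℤ)) = (-1:FK)^n * (NB n).det := by
    rw [hperm]; norm_num
  have h2 : ((-1:FK)^n) * ((-1:FK)^n) = 1 := by
    rw [← mul_pow]; norm_num
  rw [hperm', ← mul_assoc, h2, one_mul]

end Aux


/-- Trace and determinant of the braiding matrix of `B_n` on the invariant
subspace with basis `{e_{(a,2n-a)}}`:
`Tr N = n(u⁻² - u²) + u^{4n}` and `det N = (-1)^n u^{4n}`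
(in `q = u⁴`: `Tr = n(q^{-1/2} - q^{1/2}) + q^n`, `det = (-1)^n q^n`). -/
theorem stmt11 (n : ℕ) (hn : 1 ≤ n) :
    (NB n).trace = (n : FK) * (U ^ (-2 : ℤ) - U ^ (2 : ℤ)) + U ^ (4 * (n : ℤ)) ∧
    (NB n).det = (-1) ^ n * U ^ (4 * (n : ℤ)) := by
  exact ⟨trace_NB n, det_NB n⟩

end
end

section
/- Let N be the 2n×2n matrix over K defined by N_{k,j} = B^{(2n−1−k) k}_{j (2n−1−j)} for j, k ∈ {0, ..., 2n−1}, i.e. the matrix of the braiding B on its invariant subspace with basis {e_{(j, 2n−1−j)} : 0 ≤ j ≤ 2n−1}. Then Tr N = (n−1)·u⁻¹ − n·u + u^{2n−1} and det N = (−1)^n · u^{2n}. (In the variable q = u² this reads Tr = (n−1)q^{−1/2} − n q^{1/2} + q^{(2n−1)/2} and det = (−1)^n q^n.) -/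
noncomputable section

/-- The fusion matrix `M` of the fundamental `2n`-dimensional representation of
`D_n` (weights indexed by their order `0, …, 2n-1`): `M_{j,k} = 0` if
`k ≠ 2n-1-j`, `M_{j,2n-1-j} = u^{n-1-j}` for `j ≤ n-1`, and
`M_{j,2n-1-j} = u^{n-j}` for `j ≥ n`. -/
def MD (n j k : ℕ) : FK :=
  if j + k + 1 = 2 * n then
    if j < n then U ^ ((n : ℤ) - 1 - j) else U ^ ((n : ℤ) - j)
  else 0

/-- The wall-crossing coefficients `β_j^k` (`j < k`) of the braiding matrix
of `D_n`: `(u - u⁻¹)u^{k-j}` if `j, k` are both `≤ n-1` or both `≥ n`, and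
`(u - u⁻¹)u^{k-j-1} + δ_{j,2n-1-k}(u⁻¹ - u)` otherwise. -/
def betaD (n j k : ℕ) : FK :=
  if (j < n ∧ k < n) ∨ (n ≤ j ∧ n ≤ k) then
    (U - U⁻¹) * U ^ ((k : ℤ) - j)
  else
    (U - U⁻¹) * U ^ ((k : ℤ) - j - 1) +
      (if j + k + 1 = 2 * n then U⁻¹ - U else 0)

/-- Coefficients of the braiding matrix of `D_n`:
`BD n b d j k = B^{bd}_{jk}`, the coefficient of `e_{(b,d)}` in `B e_{(j,k)}`.
`B e_{(j,j)} = u⁻¹ e_{(j,j)}`; for `j ≠ k` with `j + k ≠ 2n-1`,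
`B e_{(j,k)} = e_{(k,j)}` if `j > k` and
`B e_{(j,k)} = e_{(k,j)} + (u⁻¹ - u) e_{(j,k)}` if `j < k`; for `j + k = 2n-1`,
`B e_{(j,2n-1-j)} = u e_{(2n-1-j,j)} + Σ_{k=j+1}^{2n-1} β_j^k e_{(2n-1-k,k)}`. -/
def BD (n b d j k : ℕ) : FK :=
  if j + k + 1 = 2 * n then
    if b + d + 1 = 2 * n then
      if d = j then U else if j < d then betaD n j d else 0
    else 0
  else if j = k then (if b = j ∧ d = k then U⁻¹ else 0)
  else if k < j then (if b = k ∧ d = j then 1 else 0)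
  else (if b = k ∧ d = j then (1 : FK) else 0) +
    (if b = j ∧ d = k then U⁻¹ - U else 0)

/-- The braiding matrix `B` of `D_n` as a matrix indexed by pairs `(j, k)`,
with `BmatD n (b, d) (j, k) = B^{bd}_{jk}`. -/
def BmatD (n : ℕ) :
    Matrix (Fin (2 * n) × Fin (2 * n)) (Fin (2 * n) × Fin (2 * n)) FK :=
  Matrix.of fun p q => BD n p.1 p.2 q.1 q.2

/-- The matrix of the braiding `B` of `D_n` on its invariant subspace with
basis `{e_{(j, 2n-1-j)} : 0 ≤ j ≤ 2n-1}`. -/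
def ND (n : ℕ) : Matrix (Fin (2 * n)) (Fin (2 * n)) FK :=
  Matrix.of fun k j => BD n k (2 * n - 1 - (k : ℕ)) j (2 * n - 1 - (j : ℕ))

/-! ### Auxiliary lemmas -/

lemma U_ne_zero : U ≠ 0 := by
  simpa [U] using (RatFunc.X_ne_zero : (RatFunc.X : FK) ≠ 0)

lemma rev_decomp (m : ℕ) :
    (Fin.revPerm : Equiv.Perm (Fin (m + 1))) =
      finRotate (m + 1) *
        (Fin.revPerm : Equiv.Perm (Fin m)).viaFintypeEmbedding (Fin.castSuccEmb) := by
  ext x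
  refine Fin.lastCases ?_ (fun i => ?_) x
  · rw [Equiv.Perm.mul_apply,
      Equiv.Perm.viaFintypeEmbedding_apply_notMem_range]
    · simp [finRotate_last]
    · rintro ⟨y, hy⟩
      exact absurd hy (Fin.castSucc_lt_last y).ne
  · have h : (Fin.castSuccEmb : Fin m ↪ Fin (m+1)) i = Fin.castSucc i := rfl
    rw [Equiv.Perm.mul_apply, ← h,
      Equiv.Perm.viaFintypeEmbedding_apply_image, h]
    simp only [Fin.coe_castSuccEmb, Fin.revPerm_apply, finRotate_succ_apply, Fin.rev_castSucc,
      Fin.coeSucc_eq_succ]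

lemma sign_rev (m : ℕ) :
    Equiv.Perm.sign (Fin.revPerm : Equiv.Perm (Fin m)) = (-1) ^ (m / 2) := by
  induction m with
  | zero =>
    have h : (Fin.revPerm : Equiv.Perm (Fin 0)) = 1 := Subsingleton.elim _ _
    simp [h]
  | succ m ih =>
    rw [rev_decomp, map_mul, sign_finRotate, Equiv.Perm.viaFintypeEmbedding_sign, ih,
      ← pow_add]
    rcases Nat.even_or_odd (m + m / 2) with h | h
    · have h' := Nat.even_iff.mp h
      have h2 : (m+1)/2 % 2 = 0 := by
        obtain ⟨a, ha⟩ | ⟨a, ha⟩ := Nat.even_or_odd m <;> subst ha <;> omega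
      rw [Nat.add_sub_cancel, h.neg_one_pow, (Nat.even_iff.mpr h2).neg_one_pow]
    · have h' := Nat.odd_iff.mp h
      have h2 : (m+1)/2 % 2 = 1 := by
        obtain ⟨a, ha⟩ | ⟨a, ha⟩ := Nat.even_or_odd m <;> subst ha <;> omega
      rw [Nat.add_sub_cancel, h.neg_one_pow, (Nat.odd_iff.mpr h2).neg_one_pow]

lemma ND_apply (n : ℕ) (hn : 1 ≤ n) (k j : Fin (2 * n)) :
    ND n k j =
      if 2 * n - 1 - (k : ℕ) = (j : ℕ) then U
      else if (j : ℕ) < 2 * n - 1 - (k : ℕ) then betaD n j (2 * n - 1 - (k : ℕ))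
      else 0 := by
  have hj := j.isLt
  have hk := k.isLt
  simp only [ND, Matrix.of_apply, BD]
  rw [if_pos (by omega), if_pos (by omega)]

lemma ND_diag (n : ℕ) (hn : 2 ≤ n) (k : Fin (2 * n)) :
    ND n k k =
      if (k : ℕ) < n then
        (U - U⁻¹) * U ^ (2 * (n : ℤ) - 2 - 2 * (k : ℕ)) + (U⁻¹ - U)
      else 0 := by
  have hk := k.isLt
  rw [ND_apply n (by omega)]
  by_cases h : (k : ℕ) < n
  · rw [if_neg (by omega), if_pos (by omega), if_pos h]
    unfold betaD
    rw [if_neg (by omega), if_pos (by omega)]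
    have he : ((2 * n - 1 - (k : ℕ) : ℕ) : ℤ) - (k : ℕ) - 1
        = 2 * (n : ℤ) - 2 - 2 * (k : ℕ) := by omega
    rw [he]
  · rw [if_neg (by omega), if_neg (by omega), if_neg h]

lemma zpow_step (e : ℤ) :
    (U - U⁻¹) * U ^ e = U ^ (e + 1) - U ^ (e - 1) := by
  rw [sub_mul, zpow_add_one₀ U_ne_zero, zpow_sub_one₀ U_ne_zero, mul_comm]
  ring

/-! ### Main theorem -/

/-- Trace and determinant of the braiding matrix of `D_n` on the invariant
subspace with basis `{e_{(j,2n-1-j)}}`: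
`Tr N = (n-1)u⁻¹ - n·u + u^{2n-1}` and `det N = (-1)^n u^{2n}`
(in `q = u²`: `Tr = (n-1)q^{-1/2} - n q^{1/2} + q^{(2n-1)/2}` and
`det = (-1)^n q^n`). -/
theorem stmt12 (n : ℕ) (hn : 2 ≤ n) :
    (ND n).trace = ((n : FK) - 1) * U⁻¹ - (n : FK) * U + U ^ (2 * (n : ℤ) - 1) ∧
    (ND n).det = (-1) ^ n * U ^ (2 * n) := by
  constructor
  · -- trace
    have h1 : (ND n).trace =
        ∑ k ∈ Finset.range (2 * n),
          (if k < n then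
            (U - U⁻¹) * U ^ (2 * (n : ℤ) - 2 - 2 * (k : ℕ)) + (U⁻¹ - U)
          else 0) := by
      rw [Matrix.trace, ← Fin.sum_univ_eq_sum_range]
      exact Finset.sum_congr rfl fun i _ => ND_diag n hn i
    rw [h1, ← Finset.sum_subset (Finset.range_subset_range.mpr (by omega : n ≤ 2 * n))
      (fun x hx hnx => if_neg (by simp only [Finset.mem_range] at hx hnx; omega))]
    have h2 : ∀ k ∈ Finset.range n,
        (if k < n then
            (U - U⁻¹) * U ^ (2 * (n : ℤ) - 2 - 2 * (k : ℕ)) + (U⁻¹ - U)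
          else 0) =
        (U ^ (2 * (n : ℤ) - 1 - 2 * k) - U ^ (2 * (n : ℤ) - 1 - 2 * (k + 1 : ℕ)))
          + (U⁻¹ - U) := by
      intro k hk
      rw [if_pos (Finset.mem_range.mp hk), zpow_step]
      congr 2 <;> push_cast <;> ring
    rw [Finset.sum_congr rfl h2, Finset.sum_add_distrib, Finset.sum_const,
      Finset.card_range, Finset.sum_range_sub' (fun k : ℕ => U ^ (2 * (n : ℤ) - 1 - 2 * k)) n]
    have h3 : (2 * (n : ℤ) - 1 - 2 * (n : ℕ)) = -1 := by push_cast; ring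
    have h4 : (2 * (n : ℤ) - 1 - 2 * (0 : ℕ)) = 2 * (n : ℤ) - 1 := by push_cast; ring
    rw [h3, h4, zpow_neg_one, nsmul_eq_mul]
    ring
  · -- determinant
    have hrev : ∀ i : Fin (2 * n), ((Fin.revPerm i : Fin (2 * n)) : ℕ) = 2 * n - (i + 1) :=
      fun i => rfl
    have htri : ((ND n).submatrix (Fin.revPerm : Equiv.Perm (Fin (2 * n))) id).BlockTriangular
        OrderDual.toDual := by
      intro i j hij
      have hij' : (i : ℕ) < (j : ℕ) := hij
      have hi := i.isLt
      simp only [Matrix.submatrix_apply, id]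
      rw [ND_apply n (by omega), if_neg (by rw [hrev]; omega), if_neg (by rw [hrev]; omega)]
    have hdiag : ∀ i : Fin (2 * n),
        ((ND n).submatrix (Fin.revPerm : Equiv.Perm (Fin (2 * n))) id) i i = U := by
      intro i
      have hi := i.isLt
      simp only [Matrix.submatrix_apply, id]
      rw [ND_apply n (by omega), if_pos (by rw [hrev]; omega)]
    have hdet : ((ND n).submatrix (Fin.revPerm : Equiv.Perm (Fin (2 * n))) id).det
        = U ^ (2 * n) := by
      rw [Matrix.det_of_lowerTriangular _ htri]
      simp only [hdiag]
      rw [Finset.prod_const, Finset.card_univ, Fintype.card_fin]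
    rw [Matrix.det_permute, sign_rev] at hdet
    have hn2 : 2 * n / 2 = n := by omega
    rw [hn2] at hdet
    have hcast : (((((-1 : ℤˣ) ^ n) : ℤˣ) : ℤ) : FK) = (-1 : FK) ^ n := by
      push_cast
      ring
    rw [hcast] at hdet
    have hsq : ((-1 : FK) ^ n) * ((-1 : FK) ^ n) = 1 := by
      rw [← pow_add, Even.neg_one_pow ⟨n, rfl⟩]
    calc (ND n).det = (((-1 : FK) ^ n) * ((-1 : FK) ^ n)) * (ND n).det := by
          rw [hsq, one_mul]
      _ = ((-1 : FK) ^ n) * (((-1 : FK) ^ n) * (ND n).det) := by ring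
      _ = (-1) ^ n * U ^ (2 * n) := by rw [hdet]

end
end

section
/- Let N be the 2n×2n matrix over K defined by N_{k,j} = B^{(2n−1−k) k}_{j (2n−1−j)} for j, k ∈ {0, ..., 2n−1} (the matrix of B on its invariant subspace with basis {e_{(j, 2n−1−j)}}). Then the characteristic polynomial of N equals (X − u⁻¹)^{n−1} · (X + u)^n · (X − u^{2n−1}); equivalently, the eigenvalues of the braiding matrix B on this subspace are q^{−1/2} = u⁻¹ with multiplicity n−1, −q^{1/2} = −u with multiplicity n, and q^{(2n−1)/2} = u^{2n−1} with multiplicity 1. -/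
noncomputable section

namespace Stmt15Aux

open Polynomial Matrix Finset

lemma hU : U ≠ 0 := RatFunc.X_ne_zero

lemma hUU : U * U⁻¹ = 1 := mul_inv_cancel₀ hU

lemma zsplit (a b : ℤ) (h : a = b + 1) : U ^ a = U ^ b * U := by
  rw [h, zpow_add_one₀ hU]

lemma psplit (a b : ℕ) (h : a = b + 1) : U ^ a = U ^ b * U := by
  rw [h, pow_succ]

/-- entries of `ND` as a function of natural indices -/
def nd (n i k : ℕ) : FK :=
  if i + k = 2*n - 1 then U
  else if i + k < 2*n - 1 then betaD n k (2*n - 1 - i)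
  else 0

/-- The (lower-triangular) change-of-basis matrix entries. -/
def Pent (n i j : ℕ) : FK :=
  if j < n - 1 then
    (if i = j then 1 else 0) + (if i = j + 1 then -U else 0)
      + (if i = 2*n - 2 - j then U⁻¹ else 0) + (if i = 2*n - 1 - j then -1 else 0)
  else if j = n - 1 then
    (if i = n - 1 then -1 else 0) + (if i = n then 1 else 0)
  else if j ≤ 2*n - 2 then
    (if i = j then 1 else 0) + (if i = j + 1 then -U else 0)
  else
    (if i = 2*n - 1 then 1 else 0)

/-- The (upper-triangular) matrix of the braiding in the new basis. -/
def Tent (n i j : ℕ) : FK :=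
  if j ≤ n - 1 then (if i = j then -U else 0)
  else if j ≤ 2*n - 2 then
    (if i = 2*n - 2 - j then -1 else 0) + (if i = j then U⁻¹ else 0)
  else
    if i ≤ n - 2 then U ^ (i + 1)
    else if i = n - 1 then -(U ^ n)
    else if i ≤ 2*n - 2 then U ^ i - U ^ (2*n - 2 - i)
    else U ^ (2*n - 1)

lemma nd_U {n i k : ℕ} (h : i + k = 2*n - 1) : nd n i k = U := by
  unfold nd; rw [if_pos h]

lemma nd_beta {n i k : ℕ} (h : i + k < 2*n - 1) : nd n i k = betaD n k (2*n - 1 - i) := by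
  unfold nd; rw [if_neg (by omega), if_pos h]

lemma nd_zero {n i k : ℕ} (h : 2*n - 1 < i + k) : nd n i k = 0 := by
  unfold nd; rw [if_neg (by omega), if_neg (by omega)]

lemma betaD_ll {n j k : ℕ} (h1 : j < n) (h2 : k < n) :
    betaD n j k = (U - U⁻¹) * U ^ ((k : ℤ) - j) := by
  unfold betaD; rw [if_pos (Or.inl ⟨h1, h2⟩)]

lemma betaD_hh {n j k : ℕ} (h1 : n ≤ j) (h2 : n ≤ k) :
    betaD n j k = (U - U⁻¹) * U ^ ((k : ℤ) - j) := by
  unfold betaD; rw [if_pos (Or.inr ⟨h1, h2⟩)]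

lemma betaD_m {n j k : ℕ} (h1 : j < n) (h2 : n ≤ k) (h3 : j + k + 1 ≠ 2*n) :
    betaD n j k = (U - U⁻¹) * U ^ ((k : ℤ) - j - 1) := by
  unfold betaD; rw [if_neg (by omega), if_neg h3, add_zero]

lemma betaD_md {n j k : ℕ} (h1 : j < n) (h2 : n ≤ k) (h3 : j + k + 1 = 2*n) :
    betaD n j k = (U - U⁻¹) * U ^ ((k : ℤ) - j - 1) + (U⁻¹ - U) := by
  unfold betaD; rw [if_neg (by omega), if_pos h3]

lemma sum_mul_ite (m a : ℕ) (ha : a < m) (c : FK) (f : ℕ → FK) :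
    (∑ k ∈ Finset.range m, f k * (if k = a then c else 0)) = f a * c := by
  simp only [mul_ite, mul_zero]
  rw [Finset.sum_ite_eq' (Finset.range m) a (fun k => f k * c),
    if_pos (Finset.mem_range.mpr ha)]

lemma sum_ite_mul (m a : ℕ) (ha : a < m) (c : FK) (f : ℕ → FK) :
    (∑ k ∈ Finset.range m, (if k = a then c else 0) * f k) = c * f a := by
  simp only [ite_mul, zero_mul]
  rw [Finset.sum_ite_eq' (Finset.range m) a (fun k => c * f k),
    if_pos (Finset.mem_range.mpr ha)]

lemma Pent_col1 {n j : ℕ} (hj : j < n - 1) (k : ℕ) :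
    Pent n k j = (if k = j then 1 else 0) + (if k = j + 1 then -U else 0)
      + (if k = 2*n - 2 - j then U⁻¹ else 0) + (if k = 2*n - 1 - j then -1 else 0) := by
  unfold Pent; rw [if_pos hj]

lemma Pent_col2 {n : ℕ} (hn : 2 ≤ n) (k : ℕ) :
    Pent n k (n - 1) = (if k = n - 1 then -1 else 0) + (if k = n then 1 else 0) := by
  unfold Pent; rw [if_neg (by omega), if_pos rfl]

lemma Pent_col3 {n j : ℕ} (h1 : n - 1 < j) (h2 : j ≤ 2*n - 2) (k : ℕ) :
    Pent n k j = (if k = j then 1 else 0) + (if k = j + 1 then -U else 0) := by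
  unfold Pent; rw [if_neg (by omega), if_neg (by omega), if_pos h2]

lemma Pent_col4 {n j : ℕ} (hn : 2 ≤ n) (h : 2*n - 2 < j) (k : ℕ) :
    Pent n k j = (if k = 2*n - 1 then 1 else 0) := by
  unfold Pent; rw [if_neg (by omega), if_neg (by omega), if_neg (by omega)]

lemma Tent_col1 {n j : ℕ} (hj : j ≤ n - 1) (k : ℕ) :
    Tent n k j = (if k = j then -U else 0) := by
  unfold Tent; rw [if_pos hj]

lemma Tent_col2 {n j : ℕ} (h1 : n - 1 < j) (h2 : j ≤ 2*n - 2) (k : ℕ) :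
    Tent n k j = (if k = 2*n - 2 - j then -1 else 0) + (if k = j then U⁻¹ else 0) := by
  unfold Tent; rw [if_neg (by omega), if_pos h2]

lemma Tent_last {n j : ℕ} (hn : 2 ≤ n) (h : 2*n - 2 < j) (k : ℕ) :
    Tent n k j =
      if k ≤ n - 2 then U ^ (k + 1)
      else if k = n - 1 then -(U ^ n)
      else if k ≤ 2*n - 2 then U ^ k - U ^ (2*n - 2 - k)
      else U ^ (2*n - 1) := by
  unfold Tent; rw [if_neg (by omega), if_neg (by omega)]


set_option maxHeartbeats 2000000 in
lemma key (n : ℕ) (hn : 2 ≤ n) (i j : ℕ) (hi : i < 2*n) (hj : j < 2*n) :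
    (∑ k ∈ Finset.range (2*n), nd n i k * Pent n k j)
      = ∑ k ∈ Finset.range (2*n), Pent n i k * Tent n k j := by
  by_cases hj1 : j < n - 1
  · -- CASE A : column of `s_j`
    simp only [Pent_col1 hj1, Tent_col1 (show j ≤ n - 1 by omega)]
    simp only [mul_add, Finset.sum_add_distrib]
    rw [sum_mul_ite _ _ (show j < 2*n by omega),
        sum_mul_ite _ _ (show j + 1 < 2*n by omega),
        sum_mul_ite _ _ (show 2*n - 2 - j < 2*n by omega),
        sum_mul_ite _ _ (show 2*n - 1 - j < 2*n by omega),
        sum_mul_ite _ _ (show j < 2*n by omega)]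
    rw [Pent_col1 hj1 i]
    by_cases h1 : i = j
    · subst h1
      rw [nd_beta (by omega), nd_beta (by omega), nd_beta (by omega), nd_U (by omega)]
      rw [betaD_md (by omega) (by omega) (by omega),
          betaD_m (by omega) (by omega) (by omega),
          betaD_hh (by omega) (by omega)]
      rw [if_pos rfl, if_neg (by omega), if_neg (by omega), if_neg (by omega)]
      rw [zsplit (((2*n-1-i : ℕ) : ℤ) - (i : ℤ) - 1)
            (((2*n-1-i : ℕ) : ℤ) - ((i+1 : ℕ) : ℤ) - 1) (by push_cast; ring),
          show ((2*n-1-i : ℕ) : ℤ) - ((2*n-2-i : ℕ) : ℤ) = 1 by omega, zpow_one]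
      linear_combination (U - U⁻¹) * hUU
    · by_cases h2 : i = j + 1
      · subst h2
        rw [nd_beta (by omega), nd_beta (by omega), nd_U (by omega), nd_zero (by omega)]
        rw [betaD_m (by omega) (by omega) (by omega),
            betaD_md (by omega) (by omega) (by omega)]
        rw [if_neg (by omega), if_pos rfl, if_neg (by omega), if_neg (by omega)]
        rw [zsplit (((2*n-1-(j+1) : ℕ) : ℤ) - (j : ℤ) - 1)
              (((2*n-1-(j+1) : ℕ) : ℤ) - ((j+1 : ℕ) : ℤ) - 1) (by push_cast; ring)]
        ring
      · by_cases h3 : i + j = 2*n - 2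
        · rw [nd_beta (by omega), nd_U (by omega), nd_zero (by omega), nd_zero (by omega)]
          rw [show 2*n - 1 - i = j + 1 by omega]
          rw [betaD_ll (by omega) (by omega),
              show ((j + 1 : ℕ) : ℤ) - (j : ℤ) = 1 by omega, zpow_one]
          rw [if_neg h1, if_neg h2, if_pos (by omega), if_neg (by omega)]
          ring
        · by_cases h4 : i + j = 2*n - 1
          · rw [nd_U (by omega), nd_zero (by omega), nd_zero (by omega), nd_zero (by omega)]
            rw [if_neg h1, if_neg h2, if_neg (by omega), if_pos (by omega)]
            ring
          · by_cases h5 : 2*n - 1 < i + j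
            · rw [nd_zero (by omega), nd_zero (by omega), nd_zero (by omega), nd_zero (by omega)]
              rw [if_neg h1, if_neg h2, if_neg (by omega), if_neg (by omega)]
              ring
            · by_cases h6 : i < j
              · -- four betas, two cancelling pairs
                rw [nd_beta (by omega), nd_beta (by omega), nd_beta (by omega), nd_beta (by omega)]
                rw [betaD_m (by omega) (by omega) (by omega),
                    betaD_m (by omega) (by omega) (by omega),
                    betaD_hh (by omega) (by omega),
                    betaD_hh (by omega) (by omega)]
                rw [if_neg h1, if_neg h2, if_neg (by omega), if_neg (by omega)]
                rw [zsplit (((2*n-1-i : ℕ) : ℤ) - (j : ℤ) - 1)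
                      (((2*n-1-i : ℕ) : ℤ) - ((j+1 : ℕ) : ℤ) - 1) (by push_cast; ring),
                    zsplit (((2*n-1-i : ℕ) : ℤ) - ((2*n-2-j : ℕ) : ℤ))
                      (((2*n-1-i : ℕ) : ℤ) - ((2*n-1-j : ℕ) : ℤ)) (by omega)]
                linear_combination ((U - U⁻¹) * U ^ (((2*n-1-i : ℕ) : ℤ) - ((2*n-1-j : ℕ) : ℤ))) * hUU
              · -- j + 1 < i < 2n-2-j
                rw [nd_beta (by omega), nd_beta (by omega), nd_zero (by omega), nd_zero (by omega)]
                rw [if_neg h1, if_neg h2, if_neg (by omega), if_neg (by omega)]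
                by_cases hni : n ≤ i
                · rw [betaD_ll (by omega) (by omega), betaD_ll (by omega) (by omega)]
                  rw [zsplit (((2*n-1-i : ℕ) : ℤ) - (j : ℤ))
                        (((2*n-1-i : ℕ) : ℤ) - ((j+1 : ℕ) : ℤ)) (by push_cast; ring)]
                  ring
                · rw [betaD_m (by omega) (by omega) (by omega),
                      betaD_m (by omega) (by omega) (by omega)]
                  rw [zsplit (((2*n-1-i : ℕ) : ℤ) - (j : ℤ) - 1)
                        (((2*n-1-i : ℕ) : ℤ) - ((j+1 : ℕ) : ℤ) - 1) (by push_cast; ring)]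
                  ring
  · by_cases hj2 : j = n - 1
    · -- CASE B : column of `w`
      subst hj2
      simp only [Pent_col2 hn, Tent_col1 (le_refl (n-1))]
      simp only [mul_add, Finset.sum_add_distrib]
      rw [sum_mul_ite _ _ (show n - 1 < 2*n by omega),
          sum_mul_ite _ _ (show n < 2*n by omega),
          sum_mul_ite _ _ (show n - 1 < 2*n by omega)]
      rw [Pent_col2 hn i]
      by_cases b1 : i = n - 1
      · subst b1
        rw [nd_beta (by omega), nd_U (by omega)]
        rw [show 2*n - 1 - (n-1) = n by omega]
        rw [betaD_md (by omega) (by omega) (by omega),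
            show ((n : ℕ) : ℤ) - ((n - 1 : ℕ) : ℤ) - 1 = 0 by omega, zpow_zero]
        rw [if_pos rfl, if_neg (by omega)]
        ring
      · by_cases b2 : i = n
        · subst b2
          rw [nd_U (by omega), nd_zero (by omega)]
          rw [if_neg (by omega), if_pos rfl]
          ring
        · by_cases b3 : n < i
          · rw [nd_zero (by omega), nd_zero (by omega), if_neg b1, if_neg b2]
            ring
          · rw [nd_beta (by omega), nd_beta (by omega)]
            rw [betaD_m (by omega) (by omega) (by omega), betaD_hh (by omega) (by omega)]
            rw [show ((2*n-1-i : ℕ) : ℤ) - ((n - 1 : ℕ) : ℤ) - 1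
                  = ((2*n-1-i : ℕ) : ℤ) - ((n : ℕ) : ℤ) by omega]
            rw [if_neg b1, if_neg b2]
            ring
    · by_cases hj3 : j ≤ 2*n - 2
      · -- CASE C : column of `v_j`, n ≤ j ≤ 2n-2
        have hjn : n ≤ j := by omega
        simp only [Pent_col3 (show n - 1 < j by omega) hj3,
          Tent_col2 (show n - 1 < j by omega) hj3]
        simp only [mul_add, Finset.sum_add_distrib]
        rw [sum_mul_ite _ _ (show j < 2*n by omega),
            sum_mul_ite _ _ (show j + 1 < 2*n by omega),
            sum_mul_ite _ _ (show 2*n - 2 - j < 2*n by omega),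
            sum_mul_ite _ _ (show j < 2*n by omega)]
        rw [Pent_col1 (show 2*n - 2 - j < n - 1 by omega) i,
            Pent_col3 (show n - 1 < j by omega) hj3 i]
        rw [show 2*n - 2 - (2*n - 2 - j) = j by omega,
            show 2*n - 1 - (2*n - 2 - j) = j + 1 by omega,
            show 2*n - 2 - j + 1 = 2*n - 1 - j by omega]
        by_cases c1 : i = j
        · subst c1
          rw [nd_zero (by omega), nd_zero (by omega)]
          split_ifs <;> first | ring1 | linear_combination hUU | linear_combination -hUU | (exfalso; omega)
        · by_cases c2 : i = j + 1
          · subst c2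
            rw [nd_zero (by omega), nd_zero (by omega)]
            split_ifs <;> first | ring1 | linear_combination hUU | linear_combination -hUU | (exfalso; omega)
          · by_cases c3 : i + j = 2*n - 1
            · rw [nd_U (by omega), nd_zero (by omega)]
              split_ifs <;> first | ring1 | linear_combination hUU | linear_combination -hUU | (exfalso; omega)
            · by_cases c4 : i + j = 2*n - 2
              · rw [nd_beta (by omega), nd_U (by omega)]
                rw [show 2*n - 1 - i = j + 1 by omega]
                rw [betaD_hh (by omega) (by omega),
                    show ((j + 1 : ℕ) : ℤ) - (j : ℤ) = 1 by omega, zpow_one]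
                split_ifs <;> first | ring1 | linear_combination hUU | linear_combination -hUU | (exfalso; omega)
              · by_cases c5 : i + j < 2*n - 2
                · rw [nd_beta (by omega), nd_beta (by omega)]
                  rw [betaD_hh (by omega) (by omega), betaD_hh (by omega) (by omega)]
                  rw [zsplit (((2*n-1-i : ℕ) : ℤ) - (j : ℤ))
                        (((2*n-1-i : ℕ) : ℤ) - ((j+1 : ℕ) : ℤ)) (by push_cast; ring)]
                  split_ifs <;> first | ring1 | (exfalso; omega) | exact False.elim ‹False›
                · rw [nd_zero (by omega), nd_zero (by omega)]
                  split_ifs <;> first | ring1 | (exfalso; omega) | exact False.elim ‹False›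
      · -- CASE D : last column, j = 2n-1
        have hj4 : j = 2*n - 1 := by omega
        subst hj4
        simp only [Pent_col4 (j := 2*n-1) hn (by omega)]
        rw [sum_mul_ite _ _ (show 2*n - 1 < 2*n by omega)]
        by_cases d1 : i = 0
        · subst d1
          have hrow : ∀ k, Pent n 0 k = (if k = 0 then 1 else 0) := by
            intro k; unfold Pent; split_ifs <;> first | ring1 | (exfalso; omega) | exact False.elim ‹False›
          simp only [hrow]
          rw [sum_ite_mul _ _ (show 0 < 2*n by omega)]
          rw [nd_U (by omega), Tent_last hn (by omega), if_pos (by omega)]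
          norm_num
        · by_cases d2 : i < n - 1
          · have hrow : ∀ k, Pent n i k
                = (if k = i then 1 else 0) + (if k = i - 1 then -U else 0) := by
              intro k; unfold Pent; split_ifs <;> first | ring1 | (exfalso; omega) | exact False.elim ‹False›
            simp only [hrow, add_mul, Finset.sum_add_distrib]
            rw [sum_ite_mul _ _ (show i < 2*n by omega),
                sum_ite_mul _ _ (show i - 1 < 2*n by omega)]
            rw [nd_zero (by omega)]
            rw [Tent_last hn (by omega) i, Tent_last hn (by omega) (i-1)]
            rw [if_pos (show i ≤ n - 2 by omega), if_pos (show i - 1 ≤ n - 2 by omega)]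
            rw [show i - 1 + 1 = i by omega, psplit (i+1) i rfl]
            ring
          · by_cases d3 : i = n - 1
            · subst d3
              have hrow : ∀ k, Pent n (n-1) k
                  = (if k = n - 1 then -1 else 0) + (if k = n - 2 then -U else 0) := by
                intro k; unfold Pent; split_ifs <;> first | ring1 | (exfalso; omega) | exact False.elim ‹False›
              simp only [hrow, add_mul, Finset.sum_add_distrib]
              rw [sum_ite_mul _ _ (show n - 1 < 2*n by omega),
                  sum_ite_mul _ _ (show n - 2 < 2*n by omega)]
              rw [nd_zero (by omega)]
              rw [Tent_last hn (by omega) (n-1), Tent_last hn (by omega) (n-2)]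
              rw [if_neg (by omega), if_pos rfl, if_pos (show n - 2 ≤ n - 2 by omega)]
              rw [show n - 2 + 1 = n - 1 by omega, psplit n (n-1) (by omega)]
              ring
            · by_cases d4 : i = n
              · have hrow : ∀ k, Pent n i k
                    = (if k = n then 1 else 0) + (if k = n - 1 then 1 else 0)
                      + (if k = n - 2 then U⁻¹ else 0) := by
                  intro k; unfold Pent; split_ifs <;> first | ring1 | (exfalso; omega) | exact False.elim ‹False›
                simp only [hrow, add_mul, Finset.sum_add_distrib]
                rw [sum_ite_mul _ _ (show n < 2*n by omega),
                    sum_ite_mul _ _ (show n - 1 < 2*n by omega),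
                    sum_ite_mul _ _ (show n - 2 < 2*n by omega)]
                rw [nd_zero (by omega)]
                rw [Tent_last hn (by omega) n, Tent_last hn (by omega) (n-1),
                    Tent_last hn (by omega) (n-2)]
                rw [if_neg (by omega), if_neg (by omega), if_pos (show n ≤ 2*n-2 by omega),
                    if_neg (by omega), if_pos rfl, if_pos (show n - 2 ≤ n - 2 by omega)]
                rw [show 2*n - 2 - n = n - 2 by omega, show n - 2 + 1 = n - 1 by omega,
                    psplit (n-1) (n-2) (by omega)]
                linear_combination (-(U ^ (n-2))) * hUU
              · by_cases d5 : i ≤ 2*n - 2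
                · -- n+1 ≤ i ≤ 2n-2
                  have hrow : ∀ k, Pent n i k
                      = (if k = i then 1 else 0) + (if k = i - 1 then -U else 0)
                        + (if k = 2*n - 2 - i then U⁻¹ else 0)
                        + (if k = 2*n - 1 - i then -1 else 0) := by
                    intro k; unfold Pent; split_ifs <;> first | ring1 | (exfalso; omega) | exact False.elim ‹False›
                  simp only [hrow, add_mul, Finset.sum_add_distrib]
                  rw [sum_ite_mul _ _ (show i < 2*n by omega),
                      sum_ite_mul _ _ (show i - 1 < 2*n by omega),
                      sum_ite_mul _ _ (show 2*n - 2 - i < 2*n by omega),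
                      sum_ite_mul _ _ (show 2*n - 1 - i < 2*n by omega)]
                  rw [nd_zero (by omega)]
                  rw [Tent_last hn (by omega) i, Tent_last hn (by omega) (i-1),
                      Tent_last hn (by omega) (2*n-2-i), Tent_last hn (by omega) (2*n-1-i)]
                  rw [if_neg (by omega), if_neg (by omega), if_pos (show i ≤ 2*n-2 by omega),
                      if_neg (by omega), if_neg (by omega), if_pos (show i - 1 ≤ 2*n-2 by omega),
                      if_pos (show 2*n-2-i ≤ n - 2 by omega),
                      if_pos (show 2*n-1-i ≤ n - 2 by omega)]
                  rw [show 2*n - 2 - (i-1) = 2*n - 1 - i by omega,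
                      show 2*n - 2 - i + 1 = 2*n - 1 - i by omega,
                      show 2*n - 1 - i + 1 = 2*n - i by omega,
                      psplit i (i-1) (by omega),
                      psplit (2*n-i) (2*n-1-i) (by omega),
                      psplit (2*n-1-i) (2*n-2-i) (by omega)]
                  linear_combination (-(U ^ (2*n-2-i))) * hUU
                · -- i = 2n-1
                  have hi9 : i = 2*n - 1 := by omega
                  subst hi9
                  have hrow : ∀ k, k < 2*n → Pent n (2*n-1) k
                      = (if k = 2*n - 1 then 1 else 0) + (if k = 2*n - 2 then -U else 0)
                        + (if k = 0 then -1 else 0) := by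
                    intro k hk; unfold Pent; split_ifs <;> first | ring1 | (exfalso; omega) | exact False.elim ‹False›
                  rw [show (∑ k ∈ Finset.range (2*n), Pent n (2*n-1) k * Tent n k (2*n-1))
                        = ∑ k ∈ Finset.range (2*n),
                            ((if k = 2*n - 1 then (1:FK) else 0) + (if k = 2*n - 2 then -U else 0)
                              + (if k = 0 then -1 else 0)) * Tent n k (2*n-1) from
                      Finset.sum_congr rfl fun k hk => by rw [hrow k (Finset.mem_range.mp hk)]]
                  simp only [add_mul, Finset.sum_add_distrib]
                  rw [sum_ite_mul _ _ (show 2*n - 1 < 2*n by omega),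
                      sum_ite_mul _ _ (show 2*n - 2 < 2*n by omega),
                      sum_ite_mul _ _ (show 0 < 2*n by omega)]
                  rw [nd_zero (by omega)]
                  rw [Tent_last hn (by omega) (2*n-1), Tent_last hn (by omega) (2*n-2),
                      Tent_last hn (by omega) 0]
                  rw [if_neg (by omega), if_neg (by omega), if_neg (by omega),
                      if_neg (by omega), if_neg (by omega), if_pos (show 2*n-2 ≤ 2*n-2 by omega),
                      if_pos (show (0:ℕ) ≤ n - 2 by omega)]
                  rw [show 2*n - 2 - (2*n-2) = 0 by omega, pow_zero, pow_one,
                      psplit (2*n-1) (2*n-2) (by omega)]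
                  ring

lemma ND_eq {n : ℕ} (hn : 2 ≤ n) (i j : Fin (2*n)) : ND n i j = nd n (i : ℕ) (j : ℕ) := by
  have hi := i.isLt; have hj := j.isLt
  unfold ND BD nd
  simp only [Matrix.of_apply]
  rw [if_pos (show (j:ℕ) + (2*n - 1 - (j:ℕ)) + 1 = 2*n by omega),
    if_pos (show (i:ℕ) + (2*n - 1 - (i:ℕ)) + 1 = 2*n by omega)]
  by_cases h : (i:ℕ) + (j:ℕ) = 2*n - 1
  · rw [if_pos (show 2*n - 1 - (i:ℕ) = (j:ℕ) by omega), if_pos h]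
  · rw [if_neg (show ¬ 2*n - 1 - (i:ℕ) = (j:ℕ) by omega), if_neg h]
    by_cases h2 : (i:ℕ) + (j:ℕ) < 2*n - 1
    · rw [if_pos (show (j:ℕ) < 2*n - 1 - (i:ℕ) by omega), if_pos h2]
    · rw [if_neg (show ¬ (j:ℕ) < 2*n - 1 - (i:ℕ) by omega), if_neg h2]

/-- change of basis matrix -/
def PM (n : ℕ) : Matrix (Fin (2*n)) (Fin (2*n)) FK :=
  Matrix.of fun i j => Pent n (i : ℕ) (j : ℕ)

/-- triangular form of the braiding on the invariant subspace -/
def TM (n : ℕ) : Matrix (Fin (2*n)) (Fin (2*n)) FK :=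
  Matrix.of fun i j => Tent n (i : ℕ) (j : ℕ)

lemma mulNP {n : ℕ} (hn : 2 ≤ n) : ND n * PM n = PM n * TM n := by
  ext i j
  rw [Matrix.mul_apply, Matrix.mul_apply]
  simp only [ND_eq hn, PM, TM, Matrix.of_apply]
  rw [Fin.sum_univ_eq_sum_range (fun k => nd n (i:ℕ) k * Pent n k (j:ℕ)) (2*n),
      Fin.sum_univ_eq_sum_range (fun k => Pent n (i:ℕ) k * Tent n k (j:ℕ)) (2*n)]
  exact key n hn i j i.isLt j.isLt

lemma PM_lower {n : ℕ} (hn : 2 ≤ n) :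
    (PM n).BlockTriangular OrderDual.toDual := by
  intro i j hij
  have h : (i : ℕ) < (j : ℕ) := OrderDual.toDual_lt_toDual.mp hij
  have hj := j.isLt
  show Pent n (i:ℕ) (j:ℕ) = 0
  unfold Pent
  split_ifs <;> first | ring1 | (exfalso; omega) | exact False.elim ‹False›

lemma PM_diag {n : ℕ} (hn : 2 ≤ n) (i : Fin (2*n)) :
    PM n i i = if (i : ℕ) = n - 1 then -1 else 1 := by
  have hi := i.isLt
  show Pent n (i:ℕ) (i:ℕ) = _
  unfold Pent
  split_ifs <;> first | ring1 | (exfalso; omega) | exact False.elim ‹False›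

lemma PM_det_ne {n : ℕ} (hn : 2 ≤ n) : (PM n).det ≠ 0 := by
  rw [Matrix.det_of_lowerTriangular (PM n) (PM_lower hn)]
  apply Finset.prod_ne_zero_iff.mpr
  intro i _
  rw [PM_diag hn]
  split_ifs
  · norm_num
  · norm_num

lemma Tent_lower {n : ℕ} (hn : 2 ≤ n) {i j : ℕ} (hij : j < i) (hi : i < 2*n) :
    Tent n i j = 0 := by
  unfold Tent
  split_ifs <;> first | ring1 | (exfalso; omega) | exact False.elim ‹False›

lemma TM_tri {n : ℕ} (hn : 2 ≤ n) :
    (Matrix.charmatrix (TM n)).BlockTriangular id := by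
  intro i j hij
  have h : (j : ℕ) < (i : ℕ) := hij
  rw [Matrix.charmatrix_apply_ne _ _ _ (by exact (Fin.ne_of_lt hij).symm)]
  show -(Polynomial.C (Tent n (i:ℕ) (j:ℕ))) = 0
  rw [Tent_lower hn h i.isLt, map_zero, neg_zero]

lemma Tent_diag_lo {n i : ℕ} (hi : i ≤ n - 1) : Tent n i i = -U := by
  unfold Tent; rw [if_pos hi, if_pos rfl]

lemma Tent_diag_mid {n i : ℕ} (hn : 2 ≤ n) (h1 : n ≤ i) (h2 : i ≤ 2*n - 2) :
    Tent n i i = U⁻¹ := by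
  unfold Tent
  rw [if_neg (by omega), if_pos h2, if_neg (by omega), if_pos rfl, zero_add]

lemma Tent_diag_last {n : ℕ} (hn : 2 ≤ n) : Tent n (2*n-1) (2*n-1) = U ^ (2*n - 1) := by
  unfold Tent
  rw [if_neg (by omega), if_neg (by omega), if_neg (by omega), if_neg (by omega),
    if_neg (by omega)]

end Stmt15Aux

/-- The characteristic polynomial of the braiding matrix of `D_n` on the
invariant subspace with basis `{e_{(j,2n-1-j)}}` is
`(X - u⁻¹)^{n-1} (X + u)^n (X - u^{2n-1})`: the eigenvalues are
`q^{-1/2} = u⁻¹` with multiplicity `n-1`, `-q^{1/2} = -u` with multiplicity `n`,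
and `q^{(2n-1)/2} = u^{2n-1}` with multiplicity `1`. -/
theorem stmt15 (n : ℕ) (hn : 2 ≤ n) :
    (ND n).charpoly =
      (Polynomial.X - Polynomial.C U⁻¹) ^ (n - 1) *
        (Polynomial.X + Polynomial.C U) ^ n *
        (Polynomial.X - Polynomial.C (U ^ (2 * (n : ℤ) - 1))) := by
  classical
  open Stmt15Aux Polynomial in
  have hmul := mulNP hn
  set Q : Matrix (Fin (2*n)) (Fin (2*n)) FK[X] :=
    (Polynomial.C : FK →+* FK[X]).mapMatrix (PM n) with hQ
  have hc : Matrix.charmatrix (ND n) * Q = Q * Matrix.charmatrix (TM n) := by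
    unfold Matrix.charmatrix
    rw [Matrix.sub_mul, Matrix.mul_sub]
    congr 1
    · exact (Matrix.scalar_commute (Polynomial.X : FK[X]) (fun r => Commute.all _ r) Q).eq
    · rw [hQ, ← map_mul, ← map_mul, hmul]
  have hQdet : Q.det = Polynomial.C ((PM n).det) := (RingHom.map_det Polynomial.C (PM n)).symm
  have hQne : Q.det ≠ 0 := by
    rw [hQdet]
    simpa using PM_det_ne hn
  have hdet : (Matrix.charmatrix (ND n)).det * Q.det
      = (Matrix.charmatrix (TM n)).det * Q.det := by
    rw [mul_comm ((Matrix.charmatrix (TM n)).det) Q.det, ← Matrix.det_mul, ← Matrix.det_mul, hc]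
  have hch : (ND n).charpoly = (Matrix.charmatrix (TM n)).det :=
    mul_right_cancel₀ hQne hdet
  rw [hch, Matrix.det_of_upperTriangular (TM_tri hn)]
  have hdiag : ∀ i : Fin (2*n), Matrix.charmatrix (TM n) i i
      = Polynomial.X - Polynomial.C (Tent n (i:ℕ) (i:ℕ)) := fun i => by
    rw [Matrix.charmatrix_apply_eq]; rfl
  rw [Finset.prod_congr rfl (fun i _ => hdiag i)]
  rw [Fin.prod_univ_eq_prod_range (fun i => Polynomial.X - Polynomial.C (Tent n i i)) (2*n)]
  have hsplit : 2*n = (2*n - 1) + 1 := by omega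
  rw [hsplit, Finset.prod_range_succ,
    ← Finset.prod_range_mul_prod_Ico _ (show n ≤ 2*n - 1 by omega)]
  have h1 : (∏ i ∈ Finset.range n, (Polynomial.X - Polynomial.C (Tent n i i)))
      = (Polynomial.X + Polynomial.C U) ^ n := by
    rw [Finset.prod_congr rfl (fun i hi => by
      rw [Tent_diag_lo (show i ≤ n - 1 by
            have := Finset.mem_range.mp hi; omega), map_neg, sub_neg_eq_add])]
    rw [Finset.prod_const, Finset.card_range]
  have h2 : (∏ i ∈ Finset.Ico n (2*n - 1), (Polynomial.X - Polynomial.C (Tent n i i)))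
      = (Polynomial.X - Polynomial.C U⁻¹) ^ (n - 1) := by
    rw [Finset.prod_congr rfl (fun i hi => by
      have hmem := Finset.mem_Ico.mp hi
      rw [Tent_diag_mid hn hmem.1 (by omega)])]
    rw [Finset.prod_const, Nat.card_Ico]
    congr 1
    omega
  have h3 : Tent n (2*n - 1) (2*n - 1) = U ^ (2*n - 1) := Tent_diag_last hn
  rw [h1, h2, h3]
  have hz : U ^ (2 * (n : ℤ) - 1) = U ^ (2*n - 1 : ℕ) := by
    rw [← zpow_natCast U (2*n - 1)]
    congr 1
    omega
  rw [hz]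
  ring

end
end

section
/- (Uniqueness of the wall-crossing coefficients for B_n.) Let β'^b_a ∈ K for 0 ≤ a < b ≤ 2n be arbitrary, and let B' be the K-linear endomorphism defined exactly as B except that on the subspace with a + c = 2n one sets B' e_{(a,2n−a)} = c_a e_{(2n−a,a)} + Σ_{b=a+1}^{2n} β'^b_a e_{(2n−b,b)} (with the same c_a, and with B' = B on all e_{(a,c)} with a + c ≠ 2n). Then B' is invertible; and if B' satisfies the skein relation B'^{bd}_{ac} − (B'⁻¹)^{bd}_{ac} = (u² − u⁻²)·(M_{ac}·M_{bd} − δ_a^b δ_c^d) for all a, b, c, d ∈ I, then for all 0 ≤ a < b ≤ 2n: β'^b_a = (u² − u⁻²)u^{2(b−a)} if (a−n)(b−n) > 0, β'^b_a = (u² − u⁻²)u^{2(b−a)−1} if (a−n)(b−n) = 0, and β'^b_a = (u² − u⁻²)u^{2(b−a)−2} + δ_{a,2n−b}(u⁻² − u²) if (a−n)(b−n) < 0. -/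
noncomputable section

/-- The modified braiding matrix coefficients `B'^{bd}_{ac}`, defined exactly as
those of `B`, except that on the `a + c = 2n` subspace the wall-crossing
coefficients are replaced by arbitrary `β'`. -/
def BB' (n : ℕ) (β' : ℕ → ℕ → FK) (b d a c : ℕ) : FK :=
  if a + c = 2 * n then
    if b + d = 2 * n then
      if d = a then cB n a else if a < d then β' a d else 0
    else 0
  else if a = c then (if b = a ∧ d = c then U ^ (-2 : ℤ) else 0)
  else if c < a then (if b = c ∧ d = a then 1 else 0)
  else (if b = c ∧ d = a then (1 : FK) else 0) +
    (if b = a ∧ d = c then U ^ (-2 : ℤ) - U ^ (2 : ℤ) else 0)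

/-- The modified braiding matrix `B'`. -/
def BmatB' (n : ℕ) (β' : ℕ → ℕ → FK) :
    Matrix (Fin (2 * n + 1) × Fin (2 * n + 1)) (Fin (2 * n + 1) × Fin (2 * n + 1)) FK :=
  Matrix.of fun p q => BB' n β' p.1 p.2 q.1 q.2

namespace Stmt19Aux

lemma Une : (U : FK) ≠ 0 := RatFunc.X_ne_zero

lemma cB_ne_zero (n a : ℕ) : cB n a ≠ 0 := by
  unfold cB; split
  · exact one_ne_zero
  · exact zpow_ne_zero _ Une

/-- The wall block of `B'`. -/
def Nw (n : ℕ) (β' : ℕ → ℕ → FK) : Matrix (Fin (2 * n + 1)) (Fin (2 * n + 1)) FK :=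
  Matrix.of fun b a => BB' n β' b (2 * n - (b : ℕ)) a (2 * n - (a : ℕ))

lemma Nw_apply (n : ℕ) (β' : ℕ → ℕ → FK) (b a : Fin (2 * n + 1)) :
    Nw n β' b a =
      if 2 * n - (b : ℕ) = (a : ℕ) then cB n a
      else if (a : ℕ) < 2 * n - (b : ℕ) then β' a (2 * n - (b : ℕ)) else 0 := by
  have hb := b.isLt
  have ha := a.isLt
  simp only [Nw, Matrix.of_apply, BB']
  rw [if_pos (by omega), if_pos (by omega)]

/-- The row-reversed wall block, a lower triangular matrix. -/
def Aw (n : ℕ) (β' : ℕ → ℕ → FK) : Matrix (Fin (2 * n + 1)) (Fin (2 * n + 1)) FK :=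
  (Nw n β').submatrix Fin.rev id

lemma Aw_apply (n : ℕ) (β' : ℕ → ℕ → FK) (b a : Fin (2 * n + 1)) :
    Aw n β' b a =
      if (b : ℕ) = (a : ℕ) then cB n a
      else if (a : ℕ) < (b : ℕ) then β' a b else 0 := by
  have hb := b.isLt
  have ha := a.isLt
  simp only [Aw, Matrix.submatrix_apply, id, Nw_apply, Fin.val_rev]
  have h1 : 2 * n - (2 * n + 1 - ((b : ℕ) + 1)) = (b : ℕ) := by omega
  rw [h1]

lemma Aw_tri (n : ℕ) (β' : ℕ → ℕ → FK) :
    (Aw n β').BlockTriangular OrderDual.toDual := by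
  intro i j h
  have hij : i < j := h
  have : (i : ℕ) < (j : ℕ) := hij
  rw [Aw_apply, if_neg (by omega), if_neg (by omega)]

lemma Aw_det (n : ℕ) (β' : ℕ → ℕ → FK) : IsUnit (Aw n β').det := by
  rw [Matrix.det_of_lowerTriangular _ (Aw_tri n β'), isUnit_iff_ne_zero]
  rw [Finset.prod_ne_zero_iff]
  intro i _
  rw [Aw_apply, if_pos rfl]
  exact cB_ne_zero n i

/-- The inverse of the wall block. -/
def Cw (n : ℕ) (β' : ℕ → ℕ → FK) : Matrix (Fin (2 * n + 1)) (Fin (2 * n + 1)) FK :=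
  (Aw n β')⁻¹.submatrix id Fin.rev

lemma Nw_eq_Aw (n : ℕ) (β' : ℕ → ℕ → FK) (i k : Fin (2 * n + 1)) :
    Nw n β' i k = Aw n β' i.rev k := by
  simp [Aw, Fin.rev_rev]

lemma Nw_mul_Cw (n : ℕ) (β' : ℕ → ℕ → FK) : Nw n β' * Cw n β' = 1 := by
  ext i j
  rw [Matrix.mul_apply]
  have h : ∀ k, Nw n β' i k * Cw n β' k j = Aw n β' i.rev k * (Aw n β')⁻¹ k j.rev := by
    intro k; rw [Nw_eq_Aw]; rfl
  simp_rw [h]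
  rw [← Matrix.mul_apply, Matrix.mul_nonsing_inv _ (Aw_det n β')]
  simp [Matrix.one_apply, Fin.rev_inj]

lemma Nw_det (n : ℕ) (β' : ℕ → ℕ → FK) : IsUnit (Nw n β').det := by
  have h := congrArg Matrix.det (Nw_mul_Cw n β')
  rw [Matrix.det_mul, Matrix.det_one] at h
  exact IsUnit.of_mul_eq_one _ h

lemma Nw_inv (n : ℕ) (β' : ℕ → ℕ → FK) : (Nw n β')⁻¹ = Cw n β' :=
  Matrix.inv_eq_right_inv (Nw_mul_Cw n β')

lemma Nw_inv_zero (n : ℕ) (β' : ℕ → ℕ → FK) (t a : Fin (2 * n + 1))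
    (h : (t : ℕ) + (a : ℕ) < 2 * n) : (Nw n β')⁻¹ t a = 0 := by
  rw [Nw_inv]
  show (Aw n β')⁻¹ t a.rev = 0
  haveI := Matrix.invertibleOfIsUnitDet _ (Aw_det n β')
  apply Matrix.blockTriangular_inv_of_blockTriangular (Aw_tri n β')
  show t < a.rev
  rw [Fin.lt_def, Fin.val_rev]
  omega

end Stmt19Aux

namespace Stmt19Aux

/-- Candidate inverse of the full modified braiding matrix. -/
def Bi (n : ℕ) (β' : ℕ → ℕ → FK) :
    Matrix (Fin (2 * n + 1) × Fin (2 * n + 1)) (Fin (2 * n + 1) × Fin (2 * n + 1)) FK :=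
  Matrix.of fun p q =>
    if (q.1 : ℕ) + (q.2 : ℕ) = 2 * n then
      (if (p.1 : ℕ) + (p.2 : ℕ) = 2 * n then (Nw n β')⁻¹ p.1 q.1 else 0)
    else if (q.1 : ℕ) = (q.2 : ℕ) then (if p = q then U ^ (2 : ℤ) else 0)
    else if (q.2 : ℕ) < (q.1 : ℕ) then
      (if p = (q.2, q.1) then 1 else 0) +
        (if p = q then U ^ (2 : ℤ) - U ^ (-2 : ℤ) else 0)
    else (if p = (q.2, q.1) then 1 else 0)

lemma main_mul (n : ℕ) (β' : ℕ → ℕ → FK) : BmatB' n β' * Bi n β' = 1 := by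
  ext p q
  rw [Matrix.mul_apply]
  by_cases hq : (q.1 : ℕ) + (q.2 : ℕ) = 2 * n
  · by_cases hp : (p.1 : ℕ) + (p.2 : ℕ) = 2 * n
    · -- both on the wall
      have key : ∀ r : Fin (2 * n + 1) × Fin (2 * n + 1),
          BmatB' n β' p r * Bi n β' r q =
            if r.2 = r.1.rev then Nw n β' p.1 r.1 * (Nw n β')⁻¹ r.1 q.1 else 0 := by
        intro r
        by_cases hr : (r.1 : ℕ) + (r.2 : ℕ) = 2 * n
        · have hr2 : r.2 = r.1.rev := by
            apply Fin.ext; rw [Fin.val_rev]; omega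
          rw [if_pos hr2]
          have e1 : Bi n β' r q = (Nw n β')⁻¹ r.1 q.1 := by
            simp only [Bi, Matrix.of_apply]; rw [if_pos hq, if_pos hr]
          have ep : (p.2 : ℕ) = 2 * n - (p.1 : ℕ) := by omega
          have er : (r.2 : ℕ) = 2 * n - (r.1 : ℕ) := by omega
          have e2 : BmatB' n β' p r = Nw n β' p.1 r.1 := by
            simp only [BmatB', Matrix.of_apply]
            rw [ep, er]
            rfl
          rw [e1, e2]
        · rw [if_neg (by intro h; apply hr; rw [h, Fin.val_rev]; omega)]
          have e1 : Bi n β' r q = 0 := by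
            simp only [Bi, Matrix.of_apply]; rw [if_pos hq, if_neg hr]
          rw [e1, mul_zero]
      rw [Finset.sum_congr rfl (fun r _ => key r), Fintype.sum_prod_type]
      simp_rw [Finset.sum_ite_eq' Finset.univ]
      simp only [Finset.mem_univ, if_true]
      rw [← Matrix.mul_apply, Matrix.mul_nonsing_inv _ (Nw_det n β')]
      by_cases h : p.1 = q.1
      · have h2 : p = q := by
          have := congrArg Fin.val h
          exact Prod.ext h (Fin.ext (by omega))
        rw [h2]
        simp [Matrix.one_apply]
      · rw [Matrix.one_apply_ne h, Matrix.one_apply_ne (by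
          intro hpq; exact h (congrArg Prod.fst hpq))]
    · -- p off wall, q on wall: everything vanishes
      have h0 : ∀ r ∈ Finset.univ, BmatB' n β' p r * Bi n β' r q = 0 := by
        intro r _
        by_cases hr : (r.1 : ℕ) + (r.2 : ℕ) = 2 * n
        · have : BmatB' n β' p r = 0 := by
            simp only [BmatB', Matrix.of_apply, BB']
            rw [if_pos hr, if_neg hp]
          rw [this, zero_mul]
        · have : Bi n β' r q = 0 := by
            simp only [Bi, Matrix.of_apply]; rw [if_pos hq, if_neg hr]
          rw [this, mul_zero]
      rw [Finset.sum_eq_zero h0, Matrix.one_apply_ne (by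
        intro hpq; exact hp (by rw [hpq]; exact hq))]
  · -- q off the wall
    by_cases hqd : (q.1 : ℕ) = (q.2 : ℕ)
    · have key : ∀ r, BmatB' n β' p r * Bi n β' r q =
          if r = q then BmatB' n β' p r * U ^ (2 : ℤ) else 0 := by
        intro r
        simp only [Bi, Matrix.of_apply]
        rw [if_neg hq, if_pos hqd, mul_ite, mul_zero]
      rw [Finset.sum_congr rfl (fun r _ => key r), Finset.sum_ite_eq' Finset.univ]
      simp only [Finset.mem_univ, if_true]
      have e : BmatB' n β' p q =
          if (p.1 : ℕ) = (q.1 : ℕ) ∧ (p.2 : ℕ) = (q.2 : ℕ) then U ^ (-2 : ℤ) else 0 := by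
        simp only [BmatB', Matrix.of_apply, BB']
        rw [if_neg hq, if_pos hqd]
      rw [e]
      by_cases h : p = q
      · rw [if_pos (by rw [h]; exact ⟨rfl, rfl⟩), h, Matrix.one_apply_eq]
        rw [← zpow_add₀ Une]
        norm_num
      · rw [if_neg (by
          intro ⟨h1, h2⟩
          exact h (Prod.ext (Fin.ext h1) (Fin.ext h2))), zero_mul,
          Matrix.one_apply_ne h]
    · by_cases hql : (q.2 : ℕ) < (q.1 : ℕ)
      · -- q.1 > q.2
        have key : ∀ r, BmatB' n β' p r * Bi n β' r q =
            (if r = (q.2, q.1) then BmatB' n β' p r else 0) +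
            (if r = q then BmatB' n β' p r * (U ^ (2 : ℤ) - U ^ (-2 : ℤ)) else 0) := by
          intro r
          simp only [Bi, Matrix.of_apply]
          rw [if_neg hq, if_neg hqd, if_pos hql, mul_add, mul_ite, mul_ite, mul_zero,
            mul_one]
        rw [Finset.sum_congr rfl (fun r _ => key r), Finset.sum_add_distrib,
          Finset.sum_ite_eq' Finset.univ, Finset.sum_ite_eq' Finset.univ]
        simp only [Finset.mem_univ, if_true]
        have e1 : BmatB' n β' p (q.2, q.1) =
            (if (p.1 : ℕ) = (q.1 : ℕ) ∧ (p.2 : ℕ) = (q.2 : ℕ) then (1 : FK) else 0) +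
            (if (p.1 : ℕ) = (q.2 : ℕ) ∧ (p.2 : ℕ) = (q.1 : ℕ) then
              U ^ (-2 : ℤ) - U ^ (2 : ℤ) else 0) := by
          simp only [BmatB', Matrix.of_apply, BB']
          rw [if_neg (by omega), if_neg (by omega), if_neg (by omega)]
        have e2 : BmatB' n β' p q =
            if (p.1 : ℕ) = (q.2 : ℕ) ∧ (p.2 : ℕ) = (q.1 : ℕ) then (1 : FK) else 0 := by
          simp only [BmatB', Matrix.of_apply, BB']
          rw [if_neg hq, if_neg hqd, if_pos hql]
        rw [e1, e2]
        by_cases h1 : p = q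
        · have hv1 : (p.1 : ℕ) = (q.1 : ℕ) := by rw [h1]
          have hv2 : (p.2 : ℕ) = (q.2 : ℕ) := by rw [h1]
          rw [if_pos ⟨hv1, hv2⟩, if_neg (by omega), if_neg (by omega), h1,
            Matrix.one_apply_eq]
          ring
        · by_cases h2 : p = (q.2, q.1)
          · have hv1 : (p.1 : ℕ) = (q.2 : ℕ) := by rw [h2]
            have hv2 : (p.2 : ℕ) = (q.1 : ℕ) := by rw [h2]
            rw [if_neg (by omega), if_pos ⟨hv1, hv2⟩, if_pos ⟨hv1, hv2⟩,
              Matrix.one_apply_ne h1]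
            ring
          · have hne : ¬((p.1 : ℕ) = (q.2 : ℕ) ∧ (p.2 : ℕ) = (q.1 : ℕ)) := by
              intro ⟨u1, u2⟩
              exact h2 (Prod.ext (Fin.ext u1) (Fin.ext u2))
            have hne2 : ¬((p.1 : ℕ) = (q.1 : ℕ) ∧ (p.2 : ℕ) = (q.2 : ℕ)) := by
              intro ⟨u1, u2⟩
              exact h1 (Prod.ext (Fin.ext u1) (Fin.ext u2))
            rw [if_neg hne2, if_neg hne, if_neg hne, Matrix.one_apply_ne h1]
            ring
      · -- q.1 < q.2
        have hql2 : (q.1 : ℕ) < (q.2 : ℕ) := by omega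
        have key : ∀ r, BmatB' n β' p r * Bi n β' r q =
            if r = (q.2, q.1) then BmatB' n β' p r else 0 := by
          intro r
          simp only [Bi, Matrix.of_apply]
          rw [if_neg hq, if_neg hqd, if_neg hql, mul_ite, mul_zero, mul_one]
        rw [Finset.sum_congr rfl (fun r _ => key r), Finset.sum_ite_eq' Finset.univ]
        simp only [Finset.mem_univ, if_true]
        have e1 : BmatB' n β' p (q.2, q.1) =
            if (p.1 : ℕ) = (q.1 : ℕ) ∧ (p.2 : ℕ) = (q.2 : ℕ) then (1 : FK) else 0 := by
          simp only [BmatB', Matrix.of_apply, BB']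
          rw [if_neg (by omega), if_neg (by omega), if_pos hql2]
        rw [e1]
        by_cases h1 : p = q
        · have hv1 : (p.1 : ℕ) = (q.1 : ℕ) := by rw [h1]
          have hv2 : (p.2 : ℕ) = (q.2 : ℕ) := by rw [h1]
          rw [if_pos ⟨hv1, hv2⟩, h1, Matrix.one_apply_eq]
        · rw [if_neg (by
            intro ⟨u1, u2⟩
            exact h1 (Prod.ext (Fin.ext u1) (Fin.ext u2))), Matrix.one_apply_ne h1]

lemma isUnit_BmatB' (n : ℕ) (β' : ℕ → ℕ → FK) : IsUnit (BmatB' n β') := by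
  rw [Matrix.isUnit_iff_isUnit_det]
  have h := congrArg Matrix.det (main_mul n β')
  rw [Matrix.det_mul, Matrix.det_one] at h
  exact IsUnit.of_mul_eq_one _ h

end Stmt19Aux

namespace Stmt19Aux

lemma key_algebra (n a b : ℕ) (hn : 1 ≤ n) (hab : a < b) (hb : b ≤ 2 * n) :
    (U ^ (2 : ℤ) - U ^ (-2 : ℤ)) *
      (MB n a (2 * n - a) * MB n (2 * n - b) b - (if a = 2 * n - b then (1 : FK) else 0)) =
    if 0 < ((a : ℤ) - n) * ((b : ℤ) - n) then
      (U ^ (2 : ℤ) - U ^ (-2 : ℤ)) * U ^ (2 * ((b : ℤ) - a))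
    else if ((a : ℤ) - n) * ((b : ℤ) - n) = 0 then
      (U ^ (2 : ℤ) - U ^ (-2 : ℤ)) * U ^ (2 * ((b : ℤ) - a) - 1)
    else
      (U ^ (2 : ℤ) - U ^ (-2 : ℤ)) * U ^ (2 * ((b : ℤ) - a) - 2) +
        (if a + b = 2 * n then U ^ (-2 : ℤ) - U ^ (2 : ℤ) else 0) := by
  have hU := Une
  have hc2 : ((2 * n - b : ℕ) : ℤ) = 2 * (n : ℤ) - (b : ℤ) := by
    push_cast [Nat.cast_sub hb]; ring
  simp only [MB]
  rw [if_pos (by omega : a + (2 * n - a) = 2 * n), if_pos (by omega : 2 * n - b + b = 2 * n)]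
  rcases lt_trichotomy b n with h1 | h1 | h1
  · -- b < n, so a < n and 2n - b > n
    rw [if_pos (by omega : a < n), if_neg (by omega : ¬(2 * n - b < n)),
      if_neg (by omega : ¬(2 * n - b = n)), if_neg (by omega : ¬(a = 2 * n - b)),
      if_pos (mul_pos_of_neg_of_neg (by omega : (a : ℤ) - (n : ℤ) < 0)
        (by omega : (b : ℤ) - (n : ℤ) < 0)),
      sub_zero, hc2, ← zpow_add₀ hU,
      show 2 * ((n : ℤ) - (a : ℤ)) - 1 + (2 * ((n : ℤ) - (2 * (n : ℤ) - (b : ℤ))) + 1)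
        = 2 * ((b : ℤ) - (a : ℤ)) by ring]
  · -- b = n
    have hz : ((a : ℤ) - n) * ((b : ℤ) - n) = 0 := by
      have hb0 : (b : ℤ) - (n : ℤ) = 0 := by omega
      rw [hb0, mul_zero]
    rw [if_pos (by omega : a < n), if_neg (by omega : ¬(2 * n - b < n)),
      if_pos (by omega : 2 * n - b = n), if_neg (by omega : ¬(a = 2 * n - b)),
      if_neg (not_lt.mpr (le_of_eq hz)), if_pos hz, sub_zero, mul_one,
      show 2 * ((n : ℤ) - (a : ℤ)) - 1 = 2 * ((b : ℤ) - (a : ℤ)) - 1 by omega]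
  · -- b > n
    have h2 : 2 * n - b < n := by omega
    rw [if_pos h2]
    rcases lt_trichotomy a n with h3 | h3 | h3
    · -- a < n < b
      rw [if_pos h3,
        if_neg (not_lt.mpr (le_of_lt (mul_neg_of_neg_of_pos
          (by omega : (a : ℤ) - (n : ℤ) < 0) (by omega : (0 : ℤ) < (b : ℤ) - (n : ℤ))))),
        if_neg (mul_ne_zero (by omega : (a : ℤ) - (n : ℤ) ≠ 0)
          (by omega : (b : ℤ) - (n : ℤ) ≠ 0))]
      by_cases h4 : a + b = 2 * n
      · rw [if_pos (by omega : a = 2 * n - b), if_pos h4, hc2, ← zpow_add₀ hU,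
          show 2 * ((n : ℤ) - (a : ℤ)) - 1 + (2 * ((n : ℤ) - (2 * (n : ℤ) - (b : ℤ))) - 1)
            = 2 * ((b : ℤ) - (a : ℤ)) - 2 by ring]
        ring
      · rw [if_neg (by omega : ¬(a = 2 * n - b)), if_neg h4, sub_zero, add_zero, hc2,
          ← zpow_add₀ hU,
          show 2 * ((n : ℤ) - (a : ℤ)) - 1 + (2 * ((n : ℤ) - (2 * (n : ℤ) - (b : ℤ))) - 1)
            = 2 * ((b : ℤ) - (a : ℤ)) - 2 by ring]
    · -- a = n < b
      have hz : ((a : ℤ) - n) * ((b : ℤ) - n) = 0 := by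
        have ha0 : (a : ℤ) - (n : ℤ) = 0 := by omega
        rw [ha0, zero_mul]
      rw [if_neg (by omega : ¬(a < n)), if_pos h3, if_neg (not_lt.mpr (le_of_eq hz)), if_pos hz,
        if_neg (by omega : ¬(a = 2 * n - b)), sub_zero, one_mul, hc2,
        show 2 * ((n : ℤ) - (2 * (n : ℤ) - (b : ℤ))) - 1 = 2 * ((b : ℤ) - (a : ℤ)) - 1 by omega]
    · -- n < a < b
      rw [if_neg (by omega : ¬(a < n)), if_neg (by omega : ¬(a = n)),
        if_pos (mul_pos (by omega : (0 : ℤ) < (a : ℤ) - (n : ℤ))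
          (by omega : (0 : ℤ) < (b : ℤ) - (n : ℤ))),
        if_neg (by omega : ¬(a = 2 * n - b)), sub_zero, hc2, ← zpow_add₀ hU,
        show 2 * ((n : ℤ) - (a : ℤ)) + 1 + (2 * ((n : ℤ) - (2 * (n : ℤ) - (b : ℤ))) - 1)
          = 2 * ((b : ℤ) - (a : ℤ)) by ring]

end Stmt19Aux

/-- Uniqueness of the wall-crossing coefficients for `B_n`: for arbitrary `β'`
the modified braiding `B'` is invertible, and if `B'` satisfies the skein
relation `B'^{bd}_{ac} - (B'⁻¹)^{bd}_{ac} = (u² - u⁻²)(M_{ac} M_{bd} - δ_a^b δ_c^d)`,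
then the `β'^b_a` (`0 ≤ a < b ≤ 2n`) are given by the formulas defining `betaB`:
`β'^b_a = (u² - u⁻²)u^{2(b-a)}` if `(a-n)(b-n) > 0`,
`β'^b_a = (u² - u⁻²)u^{2(b-a)-1}` if `(a-n)(b-n) = 0`, and
`β'^b_a = (u² - u⁻²)u^{2(b-a)-2} + δ_{a,2n-b}(u⁻² - u²)` if `(a-n)(b-n) < 0`. -/
theorem stmt19 (n : ℕ) (hn : 1 ≤ n) (β' : ℕ → ℕ → FK) :
    IsUnit (BmatB' n β') ∧
    ((∀ a b c d : Fin (2 * n + 1),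
        BmatB' n β' (b, d) (a, c) - (BmatB' n β')⁻¹ (b, d) (a, c) =
          (U ^ (2 : ℤ) - U ^ (-2 : ℤ)) *
            (MB n a c * MB n b d -
              (if a = b then (1 : FK) else 0) * (if c = d then (1 : FK) else 0))) →
      ∀ a b : ℕ, a < b → b ≤ 2 * n →
        β' a b =
          if 0 < ((a : ℤ) - n) * ((b : ℤ) - n) then
            (U ^ (2 : ℤ) - U ^ (-2 : ℤ)) * U ^ (2 * ((b : ℤ) - a))
          else if ((a : ℤ) - n) * ((b : ℤ) - n) = 0 then
            (U ^ (2 : ℤ) - U ^ (-2 : ℤ)) * U ^ (2 * ((b : ℤ) - a) - 1)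
          else
            (U ^ (2 : ℤ) - U ^ (-2 : ℤ)) * U ^ (2 * ((b : ℤ) - a) - 2) +
              (if a + b = 2 * n then U ^ (-2 : ℤ) - U ^ (2 : ℤ) else 0)) := by
  refine ⟨Stmt19Aux.isUnit_BmatB' n β', ?_⟩
  intro H a b hab hb
  have hinv : (BmatB' n β')⁻¹ = Stmt19Aux.Bi n β' :=
    Matrix.inv_eq_right_inv (Stmt19Aux.main_mul n β')
  have ha2 : a < 2 * n + 1 := by omega
  have hb2 : 2 * n - b < 2 * n + 1 := by omega
  set aF : Fin (2 * n + 1) := ⟨a, ha2⟩ with haF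
  set tF : Fin (2 * n + 1) := ⟨2 * n - b, hb2⟩ with htF
  have hva : (aF : ℕ) = a := rfl
  have hvt : (tF : ℕ) = 2 * n - b := rfl
  have hvar : ((aF.rev) : ℕ) = 2 * n - a := by
    rw [Fin.val_rev, hva]; omega
  have hvtr : ((tF.rev) : ℕ) = b := by
    rw [Fin.val_rev, hvt]; omega
  have h := H aF tF aF.rev tF.rev
  rw [hinv] at h
  have e1 : BmatB' n β' (tF, tF.rev) (aF, aF.rev) = β' a b := by
    simp only [BmatB', Matrix.of_apply]
    simp only [hva, hvt, hvar, hvtr]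
    simp only [BB']
    rw [if_pos (by omega : a + (2 * n - a) = 2 * n),
      if_pos (by omega : 2 * n - b + b = 2 * n),
      if_neg (by omega : ¬(b = a)), if_pos hab]
  have e2 : Stmt19Aux.Bi n β' (tF, tF.rev) (aF, aF.rev) = 0 := by
    simp only [Stmt19Aux.Bi, Matrix.of_apply]
    rw [if_pos (by simp only [hva, hvar]; omega), if_pos (by simp only [hvt, hvtr]; omega)]
    exact Stmt19Aux.Nw_inv_zero n β' tF aF (by simp only [hva, hvt]; omega)
  have hiff : (aF = tF) ↔ (a = 2 * n - b) := by
    rw [Fin.ext_iff, hva, hvt]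
  have e3 : (if aF = tF then (1 : FK) else 0) * (if aF.rev = tF.rev then (1 : FK) else 0)
      = if a = 2 * n - b then (1 : FK) else 0 := by
    by_cases hcase : a = 2 * n - b
    · rw [if_pos (hiff.mpr hcase), if_pos (Fin.rev_inj.mpr (hiff.mpr hcase)),
        if_pos hcase, one_mul]
    · rw [if_neg (fun hh => hcase (hiff.mp hh)), zero_mul, if_neg hcase]
  rw [e1, e2, sub_zero, e3] at h
  simp only [hva, hvt, hvar, hvtr] at h
  exact h.trans (Stmt19Aux.key_algebra n a b hn hab hb)

end
end
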